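/- arXiv:1309.4814 — 6 statements merged into one kernel-verified Lean document; each statement's English description precedes it below -/
import Mathlib

section
/- Let p be a prime, R = 𝔽_p[x₁,…,xₙ], J ⊆ R an ideal, g ∈ R, and e ∈ ℕ. Then g ∉ J^{[p^e]} if and only if there exists an e-Frobenius-linear map ψ : R → R with ψ(g) ∉ J. -/
/-- The Frobenius power `J^{[q]}`: the ideal generated by `q`-th powers of elements of `J`. -/
def frobeniusPower {R : Type*} [CommRing R] (J : Ideal R) (q : ℕ) : Ideal R :=
  Ideal.span ((fun g => g ^ q) '' (J : Set R))

/-- An additive map `ψ : R → R` is `e`-Frobenius-linear if `ψ(r^{pᵉ}·s) = r·ψ(s)`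
for all `r, s`. -/
def IsFrobeniusLinear (p n e : ℕ)
    (ψ : MvPolynomial (Fin n) (ZMod p) → MvPolynomial (Fin n) (ZMod p)) : Prop :=
  (∀ x y, ψ (x + y) = ψ x + ψ y) ∧ ∀ r s, ψ (r ^ p ^ e * s) = r * ψ s

/-- The test ideal `τ(f^{a/pᵉ})`: the ideal generated by the images `ψ(f^a)` over all
`e`-Frobenius-linear maps `ψ`. -/
noncomputable def testIdeal (p n : ℕ) (f : MvPolynomial (Fin n) (ZMod p)) (a e : ℕ) :
    Ideal (MvPolynomial (Fin n) (ZMod p)) :=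
  Ideal.span {y | ∃ ψ, IsFrobeniusLinear p n e ψ ∧ ψ (f ^ a) = y}

open MvPolynomial

/-- The `b`-component projection untwisted by the Frobenius: it sends
`∑ cₘ x^m` to `∑_{m ≡ b mod q} cₘ x^{⌊m/q⌋}`. -/
noncomputable def psiB (p n q : ℕ) (b : Fin n →₀ ℕ)
    (f : MvPolynomial (Fin n) (ZMod p)) : MvPolynomial (Fin n) (ZMod p) :=
  Finsupp.sum (AddMonoidAlgebra.coeff f) fun m c =>
    if ∀ i, m i % q = b i then
      MvPolynomial.monomial (Finsupp.mapRange (· / q) (Nat.zero_div q) m) c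
    else 0

theorem psiB_add (p n q : ℕ) (b : Fin n →₀ ℕ) (x y : MvPolynomial (Fin n) (ZMod p)) :
    psiB p n q b (x + y) = psiB p n q b x + psiB p n q b y := by
  unfold psiB
  apply Finsupp.sum_add_index'
  · intro m; split <;> simp
  · intro m c d; split <;> simp [map_add]

theorem psiB_monomial (p n q : ℕ) (b m : Fin n →₀ ℕ) (c : ZMod p) :
    psiB p n q b (monomial m c) =
      if ∀ i, m i % q = b i then
        MvPolynomial.monomial (Finsupp.mapRange (· / q) (Nat.zero_div q) m) c
      else 0 := by
  unfold psiB
  rw [MvPolynomial.sum_monomial_eq]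
  split <;> simp

theorem psiB_frobLinear (p n e : ℕ) (hp : p.Prime) (b : Fin n →₀ ℕ)
    (hb : ∀ i, b i < p ^ e) :
    IsFrobeniusLinear p n e (psiB p n (p ^ e) b) := by
  haveI := Fact.mk hp
  have hq : 0 < p ^ e := pow_pos hp.pos e
  refine ⟨psiB_add p n (p ^ e) b, ?_⟩
  intro r s
  induction s using MvPolynomial.induction_on' with
  | add s t ihs iht =>
      rw [mul_add, psiB_add, ihs, iht, psiB_add, mul_add]
  | monomial m d =>
      induction r using MvPolynomial.induction_on' with
      | add r1 r2 ih1 ih2 =>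
          rw [add_pow_char_pow, add_mul, psiB_add, ih1, ih2, add_mul]
      | monomial a c =>
          rw [monomial_pow, monomial_mul, psiB_monomial, psiB_monomial,
            ZMod.pow_card_pow]
          have hcond : (∀ i, (p ^ e • a + m) i % p ^ e = b i) ↔ (∀ i, m i % p ^ e = b i) := by
            apply forall_congr'
            intro i
            rw [Finsupp.add_apply, Finsupp.smul_apply, smul_eq_mul, Nat.mul_add_mod]
          by_cases h : ∀ i, m i % p ^ e = b i
          · have hdiv : Finsupp.mapRange (· / p ^ e) (Nat.zero_div (p ^ e)) (p ^ e • a + m) =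
                a + Finsupp.mapRange (· / p ^ e) (Nat.zero_div (p ^ e)) m := by
              apply Finsupp.ext
              intro i
              rw [Finsupp.add_apply, Finsupp.mapRange_apply, Finsupp.mapRange_apply,
                Finsupp.add_apply, Finsupp.smul_apply, smul_eq_mul, Nat.mul_add_div hq]
            rw [if_pos (hcond.mpr h), if_pos h, monomial_mul, hdiv]
          · rw [if_neg (fun hc => h (hcond.mp hc)), if_neg h, mul_zero]

theorem mem_frobeniusPower_of_psiB (p n e : ℕ) (hp : p.Prime)
    (J : Ideal (MvPolynomial (Fin n) (ZMod p))) (g : MvPolynomial (Fin n) (ZMod p))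
    (h : ∀ b : Fin n →₀ ℕ, (∀ i, b i < p ^ e) → psiB p n (p ^ e) b g ∈ J) :
    g ∈ frobeniusPower J (p ^ e) := by
  classical
  haveI := Fact.mk hp
  haveI : ExpChar (MvPolynomial (Fin n) (ZMod p)) p := ExpChar.prime hp
  have hq : 0 < p ^ e := pow_pos hp.pos e
  set res : (Fin n →₀ ℕ) → (Fin n →₀ ℕ) :=
    fun m => Finsupp.mapRange (· % p ^ e) (Nat.zero_mod (p ^ e)) m with hres
  have key : g = ∑ b ∈ g.support.image res,
      (psiB p n (p ^ e) b g) ^ p ^ e * monomial b 1 := by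
    conv_lhs => rw [g.as_sum]
    rw [← Finset.sum_fiberwise_of_maps_to (g := res)
      (fun m hm => Finset.mem_image_of_mem res hm) (fun m => monomial m (coeff m g))]
    apply Finset.sum_congr rfl
    intro b _
    have hpsi : psiB p n (p ^ e) b g =
        ∑ m ∈ g.support.filter (fun m => res m = b),
          monomial (Finsupp.mapRange (· / p ^ e) (Nat.zero_div (p ^ e)) m) (coeff m g) := by
      unfold psiB
      rw [MvPolynomial.sum_def, Finset.sum_filter]
      apply Finset.sum_congr rfl
      intro m _
      by_cases hc : ∀ i, m i % p ^ e = b i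
      · rw [if_pos hc, if_pos (Finsupp.ext fun i => by
          rw [hres]; simpa [Finsupp.mapRange_apply] using hc i)]
      · rw [if_neg hc, if_neg (fun hcon => hc fun i => by
          rw [← hcon, hres]; simp [Finsupp.mapRange_apply])]
    rw [hpsi, sum_pow_char_pow, Finset.sum_mul]
    apply Finset.sum_congr rfl
    intro m hm
    have hmres : res m = b := (Finset.mem_filter.mp hm).2
    rw [monomial_pow, monomial_mul, ZMod.pow_card_pow, mul_one]
    have hrec : p ^ e • Finsupp.mapRange (· / p ^ e) (Nat.zero_div (p ^ e)) m + b = m := by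
      apply Finsupp.ext
      intro i
      have hbi : b i = m i % p ^ e := by rw [← hmres, hres, Finsupp.mapRange_apply]
      rw [Finsupp.add_apply, Finsupp.smul_apply, Finsupp.mapRange_apply, smul_eq_mul, hbi,
        Nat.div_add_mod]
    rw [hrec]
  rw [key]
  apply Ideal.sum_mem
  intro b hb
  have hblt : ∀ i, b i < p ^ e := by
    obtain ⟨m, _, rfl⟩ := Finset.mem_image.mp hb
    intro i
    rw [hres, Finsupp.mapRange_apply]
    exact Nat.mod_lt _ hq
  exact Ideal.mul_mem_right _ _
    (Ideal.subset_span ⟨psiB p n (p ^ e) b g, h b hblt, rfl⟩)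

theorem psi_mem_of_mem (p n e : ℕ)
    (J : Ideal (MvPolynomial (Fin n) (ZMod p))) (g : MvPolynomial (Fin n) (ZMod p))
    (ψ : MvPolynomial (Fin n) (ZMod p) → MvPolynomial (Fin n) (ZMod p))
    (hψ : IsFrobeniusLinear p n e ψ) (hg : g ∈ frobeniusPower J (p ^ e)) : ψ g ∈ J := by
  obtain ⟨hadd, hlin⟩ := hψ
  obtain ⟨c, hc, hsum⟩ := Submodule.mem_span_set.mp hg
  set ψ' : MvPolynomial (Fin n) (ZMod p) →+ MvPolynomial (Fin n) (ZMod p) :=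
    AddMonoidHom.mk' ψ hadd with hψ'
  have : ψ g = ∑ u ∈ c.support, ψ (c u • u) := by
    rw [← hsum, Finsupp.sum]
    exact map_sum ψ' _ _
  rw [this]
  apply Ideal.sum_mem
  intro u hu
  obtain ⟨h, hhJ, rfl⟩ := hc hu
  rw [smul_eq_mul, mul_comm, hlin]
  exact Ideal.mul_mem_right _ J hhJ

theorem not_mem_frobeniusPower_iff_exists_frobLinear (p n e : ℕ) (hp : p.Prime)
    (J : Ideal (MvPolynomial (Fin n) (ZMod p))) (g : MvPolynomial (Fin n) (ZMod p)) :
    g ∉ frobeniusPower J (p ^ e) ↔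
      ∃ ψ, IsFrobeniusLinear p n e ψ ∧ ψ g ∉ J := by
  constructor
  · intro hg
    by_contra hcon
    push_neg at hcon
    exact hg (mem_frobeniusPower_of_psiB p n e hp J g fun b hb =>
      hcon _ (psiB_frobLinear p n e hp b hb))
  · rintro ⟨ψ, hψ, hne⟩ hg
    exact hne (psi_mem_of_mem p n e J g ψ hψ hg)
end

section
/- Let p be a prime, R = 𝔽_p[x₁,…,xₙ], f ∈ R, and a, e ∈ ℕ. Then the test ideal τ(f^{a/p^e}) is the smallest ideal J of R such that f^a ∈ J^{[p^e]}; that is, f^a ∈ (τ(f^{a/p^e}))^{[p^e]}, and for every ideal J ⊆ R with f^a ∈ J^{[p^e]} one has τ(f^{a/p^e}) ⊆ J. -/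
open MvPolynomial

section Aux
variable {p n : ℕ} (q : ℕ)

lemma inj_aux (hq : 0 < q) (ν : Fin n →₀ ℕ) :
    Function.Injective (fun m : Fin n →₀ ℕ => q • m + ν) := by
  intro m m' h
  simp only [add_left_inj] at h
  ext i
  have := congrArg (fun x => x i) h
  simp only [Finsupp.smul_apply, smul_eq_mul] at this
  exact Nat.eq_of_mul_eq_mul_left hq this

noncomputable def psi (hq : 0 < q) (ν : Fin n →₀ ℕ)
    (h : MvPolynomial (Fin n) (ZMod p)) : MvPolynomial (Fin n) (ZMod p) :=
  AddMonoidAlgebra.ofCoeff (Finsupp.comapDomain (fun m => q • m + ν) (AddMonoidAlgebra.coeff h) (inj_aux q hq ν).injOn)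

lemma coeff_psi (hq : 0 < q) (ν : Fin n →₀ ℕ)
    (h : MvPolynomial (Fin n) (ZMod p)) (m : Fin n →₀ ℕ) :
    coeff m (psi q hq ν h) = coeff (q • m + ν) h := rfl

lemma psi_add (hq : 0 < q) (ν : Fin n →₀ ℕ) (x y : MvPolynomial (Fin n) (ZMod p)) :
    psi q hq ν (x + y) = psi q hq ν x + psi q hq ν y := by
  ext m; simp [coeff_psi]

lemma psi_monomial_eq (hq : 0 < q) (ν m : Fin n →₀ ℕ) (c : ZMod p) :
    psi q hq ν (monomial (q • m + ν) c) = monomial m c := by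
  ext m'
  rw [coeff_psi, coeff_monomial, coeff_monomial]
  exact if_congr ⟨fun h => inj_aux q hq ν h, fun h => by rw [h]⟩ rfl rfl

lemma psi_monomial_ne (hq : 0 < q) (ν d : Fin n →₀ ℕ) (c : ZMod p)
    (hd : ∀ m, q • m + ν ≠ d) : psi q hq ν (monomial d c) = 0 := by
  ext m'
  rw [coeff_psi, coeff_monomial, coeff_zero, if_neg]
  exact fun h => hd m' h.symm

end Aux

section Frob
variable {p n : ℕ} [Fact p.Prime] (e : ℕ)

lemma psi_frob (hq : 0 < p ^ e) (ν : Fin n →₀ ℕ) (hν : ∀ i, ν i < p ^ e)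
    (r s : MvPolynomial (Fin n) (ZMod p)) :
    psi (p ^ e) hq ν (r ^ p ^ e * s) = r * psi (p ^ e) hq ν s := by
  set q := p ^ e with hqdef
  induction r using MvPolynomial.induction_on' generalizing s with
  | add r₁ r₂ ih₁ ih₂ =>
    rw [add_pow_char_pow, add_mul, psi_add, ih₁, ih₂, add_mul]
  | monomial u a =>
    induction s using MvPolynomial.induction_on' with
    | add s₁ s₂ ih₁ ih₂ => rw [mul_add, psi_add, ih₁, ih₂, psi_add, mul_add]
    | monomial v d =>
      rw [monomial_pow, monomial_mul, ZMod.pow_card_pow]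
      by_cases hcase : ∃ m', q • m' + ν = v
      · obtain ⟨m', rfl⟩ := hcase
        have h1 : q • u + (q • m' + ν) = q • (u + m') + ν := by
          rw [smul_add, add_assoc]
        rw [h1, psi_monomial_eq, psi_monomial_eq, monomial_mul]
      · rw [psi_monomial_ne _ hq _ _ _ (fun m h => hcase ⟨m, h⟩), mul_zero,
          psi_monomial_ne]
        intro m hm
        have hle : u ≤ m := by
          rw [Finsupp.le_def]
          intro i
          have hi := congrArg (fun x => x i) hm
          simp only [Finsupp.add_apply, Finsupp.smul_apply, smul_eq_mul] at hi
          have : q * u i < q * (m i + 1) := by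
            calc q * u i ≤ q * u i + v i := Nat.le_add_right _ _
            _ = q * m i + ν i := hi.symm
            _ < q * m i + q := by exact Nat.add_lt_add_left (hν i) _
            _ = q * (m i + 1) := by ring
          exact Nat.lt_succ_iff.mp (Nat.lt_of_mul_lt_mul_left this)
        apply hcase
        refine ⟨m - u, ?_⟩
        have h2 : m = u + (m - u) := (add_tsub_cancel_of_le hle).symm
        rw [h2, smul_add] at hm
        rw [add_assoc] at hm
        exact (add_left_cancel hm)

end Frob

section Recon
variable {p n : ℕ}

noncomputable def Tset (n q : ℕ) : Finset (Fin n →₀ ℕ) :=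
  (Finset.univ : Finset (Fin n → Fin q)).image
    (fun g => Finsupp.equivFunOnFinite.symm (fun i => (g i : ℕ)))

lemma mem_Tset {n q : ℕ} (ν : Fin n →₀ ℕ) : ν ∈ Tset n q ↔ ∀ i, ν i < q := by
  constructor
  · rintro hm i
    simp only [Tset, Finset.mem_image] at hm
    obtain ⟨g, -, rfl⟩ := hm
    simp only [Finsupp.coe_equivFunOnFinite_symm]; exact (g i).isLt
  · intro h
    simp only [Tset, Finset.mem_image]
    refine ⟨fun i => ⟨ν i, h i⟩, Finset.mem_univ _, ?_⟩
    apply Finsupp.equivFunOnFinite.symm_apply_eq.mpr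
    ext i
    simp

noncomputable def dmod (q : ℕ) (d : Fin n →₀ ℕ) : Fin n →₀ ℕ := d.mapRange (· % q) (Nat.zero_mod q)
noncomputable def ddiv (q : ℕ) (d : Fin n →₀ ℕ) : Fin n →₀ ℕ := d.mapRange (· / q) (Nat.zero_div q)

lemma ddiv_dmod (q : ℕ) (d : Fin n →₀ ℕ) : q • ddiv q d + dmod q d = d := by
  ext i
  simp only [Finsupp.add_apply, Finsupp.smul_apply, smul_eq_mul, dmod, ddiv,
    Finsupp.mapRange_apply]
  exact Nat.div_add_mod _ _

lemma recon [Fact p.Prime] (e : ℕ) (hq : 0 < p ^ e) (h : MvPolynomial (Fin n) (ZMod p)) :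
    ∑ ν ∈ Tset n (p ^ e), (psi (p ^ e) hq ν h) ^ p ^ e * MvPolynomial.monomial ν 1 = h := by
  set q := p ^ e with hqdef
  induction h using MvPolynomial.induction_on' with
  | add h₁ h₂ ih₁ ih₂ =>
    conv_rhs => rw [← ih₁, ← ih₂]
    rw [← Finset.sum_add_distrib]
    apply Finset.sum_congr rfl
    intro ν _
    rw [psi_add, add_pow_char_pow, add_mul]
  | monomial d c =>
    have hkey : q • ddiv q d + dmod q d = d := ddiv_dmod q d
    rw [Finset.sum_eq_single (dmod q d)]
    · have hpsi := psi_monomial_eq q hq (dmod q d) (ddiv q d) c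
      rw [hkey] at hpsi
      rw [hpsi, monomial_pow, monomial_mul, ZMod.pow_card_pow, mul_one, hkey]
    · intro ν hν hne
      rw [psi_monomial_ne, zero_pow hq.ne', zero_mul]
      intro m hm
      apply hne
      ext i
      have hi := congrArg (fun x => x i) hm
      simp only [Finsupp.add_apply, Finsupp.smul_apply, smul_eq_mul] at hi
      have hνi : ν i < q := (mem_Tset ν).mp hν i
      simp only [dmod, Finsupp.mapRange_apply]
      rw [← hi, Nat.mul_add_mod, Nat.mod_eq_of_lt hνi]
    · intro habs
      exact absurd ((mem_Tset _).mpr (fun i => by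
        simp only [dmod, Finsupp.mapRange_apply]; exact Nat.mod_lt _ hq)) habs

end Recon


theorem testIdeal_smallest (p n : ℕ) (hp : p.Prime)
    (f : MvPolynomial (Fin n) (ZMod p)) (a e : ℕ) :
    f ^ a ∈ frobeniusPower (testIdeal p n f a e) (p ^ e) ∧
    ∀ J : Ideal (MvPolynomial (Fin n) (ZMod p)),
      f ^ a ∈ frobeniusPower J (p ^ e) → testIdeal p n f a e ≤ J := by
  haveI := Fact.mk hp
  have hq : 0 < p ^ e := pow_pos hp.pos e
  constructor
  · -- f^a ∈ τ^{[q]}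
    have hrec := recon (p := p) (n := n) e hq (f ^ a)
    rw [← hrec]
    apply Ideal.sum_mem
    intro ν hν
    apply Ideal.mul_mem_right
    apply Ideal.subset_span
    refine ⟨psi (p ^ e) hq ν (f ^ a), ?_, rfl⟩
    apply Ideal.subset_span
    exact ⟨psi (p ^ e) hq ν, ⟨psi_add _ hq ν, psi_frob e hq ν ((mem_Tset ν).mp hν)⟩, rfl⟩
  · intro J hJ
    rw [testIdeal]
    apply Ideal.span_le.mpr
    rintro y ⟨ψ, ⟨hadd, hfrob⟩, rfl⟩
    rw [frobeniusPower] at hJ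
    obtain ⟨c, hsupp, hsum⟩ := Submodule.mem_span_set.mp hJ
    have hzero : ψ 0 = 0 := by
      have := hadd 0 0
      simpa using this.symm
    let Ψ : MvPolynomial (Fin n) (ZMod p) →+ MvPolynomial (Fin n) (ZMod p) :=
      AddMonoidHom.mk' ψ hadd
    have : ψ (f ^ a) = c.sum fun g r => ψ (r • g) := by
      rw [← hsum]
      exact map_finsuppSum Ψ c _
    rw [this]
    apply Submodule.sum_mem
    intro g hg
    have hgs : g ∈ (fun g => g ^ p ^ e) '' (J : Set _) := hsupp hg
    obtain ⟨g₀, hg₀, rfl⟩ := hgs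
    show ψ (c (g₀ ^ p ^ e) • g₀ ^ p ^ e) ∈ J
    rw [smul_eq_mul, mul_comm, hfrob]
    exact Ideal.mul_mem_right _ J hg₀
end

section
/- Let p be a prime, R = 𝔽_p[x₁,…,xₙ], f ∈ R, and a, e ∈ ℕ. Then the test ideal is independent of the representation of the exponent a/p^e = ap/p^{e+1}: the ideal generated by {ψ(f^a) : ψ e-Frobenius-linear} equals the ideal generated by {φ(f^{ap}) : φ (e+1)-Frobenius-linear}, i.e., τ(f^{a/p^e}) = τ(f^{ap/p^{e+1}}). -/
open MvPolynomial

theorem psmul_inj {n p : ℕ} (hp : p ≠ 0) :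
    Function.Injective (fun m : Fin n →₀ ℕ => p • m) := by
  intro a b h
  ext i
  have := DFunLike.congr_fun h i
  simp only [Finsupp.smul_apply, smul_eq_mul] at this
  exact Nat.eq_of_mul_eq_mul_left (Nat.pos_of_ne_zero hp) this

noncomputable def pi0 (p n : ℕ) (hp : p ≠ 0) (g : MvPolynomial (Fin n) (ZMod p)) :
    MvPolynomial (Fin n) (ZMod p) :=
  AddMonoidAlgebra.ofCoeff (Finsupp.comapDomain (fun m => p • m) (AddMonoidAlgebra.coeff g) (psmul_inj hp).injOn)

theorem pi0_coeff (p n : ℕ) (hp : p ≠ 0) (g : MvPolynomial (Fin n) (ZMod p)) (m : Fin n →₀ ℕ) :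
    coeff m (pi0 p n hp g) = coeff (p • m) g := rfl

theorem pi0_add (p n : ℕ) (hp : p ≠ 0) (f g : MvPolynomial (Fin n) (ZMod p)) :
    pi0 p n hp (f + g) = pi0 p n hp f + pi0 p n hp g := by
  ext m; simp [pi0_coeff, coeff_add]

theorem pi0_one (p n : ℕ) (hp : p ≠ 0) : pi0 p n hp 1 = 1 := by
  ext m
  rw [pi0_coeff]
  rcases eq_or_ne m 0 with rfl | h
  · simp
  · rw [coeff_one, coeff_one, if_neg, if_neg]
    · exact fun h0 => h h0.symm
    · intro h0
      exact h (psmul_inj hp (a₁ := m) (a₂ := 0) (by simpa using h0.symm))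

theorem psmul_le_iff {n p : ℕ} (hp : p ≠ 0) (u m : Fin n →₀ ℕ) :
    p • u ≤ p • m ↔ u ≤ m := by
  rw [Finsupp.le_def, Finsupp.le_def]
  constructor <;> intro h i <;> have := h i <;>
    simp only [Finsupp.smul_apply, smul_eq_mul] at * <;>
    [exact Nat.le_of_mul_le_mul_left this (Nat.pos_of_ne_zero hp);
     exact Nat.mul_le_mul_left p this]

theorem psmul_sub {n p : ℕ} (u m : Fin n →₀ ℕ) :
    p • m - p • u = p • (m - u) := by
  ext i
  simp [Finsupp.tsub_apply, Nat.mul_sub]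

theorem pi0_key (p n : ℕ) (hp : p.Prime) (r s : MvPolynomial (Fin n) (ZMod p)) :
    pi0 p n hp.ne_zero (r ^ p * s) = r * pi0 p n hp.ne_zero s := by
  haveI : Fact p.Prime := ⟨hp⟩
  induction r using MvPolynomial.induction_on' with
  | monomial u c =>
    rw [monomial_pow, ZMod.pow_card]
    ext m
    rw [pi0_coeff, coeff_monomial_mul', coeff_monomial_mul', pi0_coeff]
    by_cases h : u ≤ m
    · rw [if_pos h, if_pos ((psmul_le_iff hp.ne_zero u m).2 h), psmul_sub]
    · rw [if_neg h, if_neg (fun h' => h ((psmul_le_iff hp.ne_zero u m).1 h'))]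
  | add q1 q2 h1 h2 =>
    rw [add_pow_char, add_mul, pi0_add, h1, h2, add_mul]

theorem testIdeal_indep_of_representation (p n : ℕ) (hp : p.Prime)
    (f : MvPolynomial (Fin n) (ZMod p)) (a e : ℕ) :
    testIdeal p n f a e = testIdeal p n f (a * p) (e + 1) := by
  haveI : Fact p.Prime := ⟨hp⟩
  have hset : {y | ∃ ψ, IsFrobeniusLinear p n e ψ ∧ ψ (f ^ a) = y} =
      {y | ∃ φ, IsFrobeniusLinear p n (e + 1) φ ∧ φ (f ^ (a * p)) = y} := by
    ext y
    constructor
    · rintro ⟨ψ, ⟨hadd, hlin⟩, rfl⟩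
      refine ⟨fun s => ψ (pi0 p n hp.ne_zero s), ⟨?_, ?_⟩, ?_⟩
      · intro x y; dsimp only; rw [pi0_add, hadd]
      · intro r s
        have h1 : r ^ p ^ (e + 1) * s = (r ^ p ^ e) ^ p * s := by
          rw [← pow_mul, pow_succ]
        dsimp only; rw [h1, pi0_key p n hp, hlin]
      · have h2 : f ^ (a * p) = (f ^ a) ^ p * 1 := by rw [mul_one, pow_mul]
        dsimp only; rw [h2, pi0_key p n hp, pi0_one, mul_one]
    · rintro ⟨φ, ⟨hadd, hlin⟩, rfl⟩
      refine ⟨fun s => φ (s ^ p), ⟨?_, ?_⟩, ?_⟩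
      · intro x y; dsimp only; rw [add_pow_char, hadd]
      · intro r s; dsimp only; rw [mul_pow, ← pow_mul, ← pow_succ, hlin]
      · dsimp only; rw [← pow_mul]
  unfold testIdeal
  rw [hset]
end

section
/- Let p be a prime, R = 𝔽_p[x₁,…,xₙ], f ∈ R nonzero, and a, e ∈ ℕ. Then there exists N ≥ e such that for all n ≥ N one has τ(f^{(a·p^{n−e} + 1)/p^n}) = τ(f^{(a·p^{n−e})/p^n}); that is, for c = a/p^e, τ(f^{c + 1/p^n}) = τ(f^c) for all sufficiently large n. -/
open MvPolynomial

variable {p n : ℕ}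

noncomputable def rootFun (q : ℕ) (hq : q ≠ 0) (α : Fin n →₀ ℕ)
    (g : MvPolynomial (Fin n) (ZMod p)) : MvPolynomial (Fin n) (ZMod p) :=
  AddMonoidAlgebra.ofCoeff (Finsupp.comapDomain (fun γ : Fin n →₀ ℕ => q • γ + α)
    (AddMonoidAlgebra.coeff g)
    (Set.injOn_of_injective (fun γ γ' h => by
      ext i
      have := DFunLike.congr_fun h i
      simp only [Finsupp.add_apply, Finsupp.smul_apply, smul_eq_mul] at this
      exact Nat.eq_of_mul_eq_mul_left (Nat.pos_of_ne_zero hq) (by omega))))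

theorem coeff_rootFun (q : ℕ) (hq : q ≠ 0) (α γ : Fin n →₀ ℕ)
    (g : MvPolynomial (Fin n) (ZMod p)) :
    coeff γ (rootFun q hq α g) = coeff (q • γ + α) g := rfl

theorem rootFun_add (q : ℕ) (hq : q ≠ 0) (α : Fin n →₀ ℕ)
    (g h : MvPolynomial (Fin n) (ZMod p)) :
    rootFun q hq α (g + h) = rootFun q hq α g + rootFun q hq α h := by
  apply MvPolynomial.ext; intro γ
  simp [coeff_rootFun, coeff_add]

theorem rootFun_zero (q : ℕ) (hq : q ≠ 0) (α : Fin n →₀ ℕ) :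
    rootFun q hq α (0 : MvPolynomial (Fin n) (ZMod p)) = 0 := by
  apply MvPolynomial.ext; intro γ; simp [coeff_rootFun]

theorem rootFun_monomial_hit (q : ℕ) (hq : q ≠ 0) (α γ : Fin n →₀ ℕ) (c : ZMod p) :
    rootFun q hq α (monomial (q • γ + α) c) = monomial γ c := by
  apply MvPolynomial.ext; intro γ'
  rw [coeff_rootFun, coeff_monomial, coeff_monomial]
  congr 1
  simp only [eq_iff_iff]
  constructor
  · intro h
    ext i
    have := DFunLike.congr_fun h i
    simp only [Finsupp.add_apply, Finsupp.smul_apply, smul_eq_mul] at this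
    exact Nat.eq_of_mul_eq_mul_left (Nat.pos_of_ne_zero hq) (by omega)
  · rintro rfl; rfl

theorem rootFun_monomial_miss (q : ℕ) (hq : q ≠ 0) (α β : Fin n →₀ ℕ) (c : ZMod p)
    (h : ∀ γ : Fin n →₀ ℕ, β ≠ q • γ + α) :
    rootFun q hq α (monomial β c) = 0 := by
  apply MvPolynomial.ext; intro γ'
  rw [coeff_rootFun, coeff_monomial, coeff_zero, if_neg]
  exact fun hc => h γ' hc

/-- The "box" of exponents `α` with all components `< q`. -/
noncomputable def box (n q : ℕ) : Finset (Fin n →₀ ℕ) :=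
  Finset.image (fun v : Fin n → Fin q => Finsupp.equivFunOnFinite.symm fun i => (v i : ℕ))
    Finset.univ

theorem mem_box {q : ℕ} (hq : q ≠ 0) (α : Fin n →₀ ℕ) :
    α ∈ box n q ↔ ∀ i, α i < q := by
  constructor
  · rintro h i
    simp only [box, Finset.mem_image, Finset.mem_univ, true_and] at h
    obtain ⟨v, rfl⟩ := h
    simpa using (v i).isLt
  · intro h
    simp only [box, Finset.mem_image, Finset.mem_univ, true_and]
    exact ⟨fun i => ⟨α i, h i⟩, by ext i; simp⟩

theorem fermat (hp : p.Prime) (e : ℕ) (c : ZMod p) : c ^ p ^ e = c := by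
  haveI := Fact.mk hp
  exact ZMod.pow_card_pow c

/-- Semilinearity of the root map. -/
theorem rootFun_semilinear (hp : p.Prime) (e : ℕ) (hq : p ^ e ≠ 0) (α : Fin n →₀ ℕ)
    (hα : ∀ i, α i < p ^ e) (s r : MvPolynomial (Fin n) (ZMod p)) :
    rootFun (p ^ e) hq α (s ^ p ^ e * r) = s * rootFun (p ^ e) hq α r := by
  haveI := Fact.mk hp
  induction r using MvPolynomial.induction_on' with
  | add r₁ r₂ ih1 ih2 =>
    rw [mul_add, rootFun_add, ih1, ih2, rootFun_add, mul_add]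
  | monomial β d =>
    induction s using MvPolynomial.induction_on' with
    | add s₁ s₂ ih1 ih2 =>
      rw [add_pow_char_pow s₁ s₂ p e, add_mul, rootFun_add, ih1, ih2, add_mul]
    | monomial δ c =>
      rw [monomial_pow, monomial_mul]
      by_cases hhit : ∃ γ, β = p ^ e • γ + α
      · obtain ⟨γ, rfl⟩ := hhit
        have harr : p ^ e • δ + (p ^ e • γ + α) = p ^ e • (δ + γ) + α := by
          rw [smul_add, add_assoc]
        rw [harr, rootFun_monomial_hit, rootFun_monomial_hit, monomial_mul]
        congr 1
        rw [fermat hp e]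
      · push_neg at hhit
        rw [rootFun_monomial_miss (p ^ e) hq α β d hhit, mul_zero]
        apply rootFun_monomial_miss
        intro γ' heq
        apply hhit (γ' - δ)
        ext i
        have h1 := DFunLike.congr_fun heq i
        simp only [Finsupp.add_apply, Finsupp.smul_apply, smul_eq_mul,
          Finsupp.tsub_apply] at h1 ⊢
        have hδ : δ i ≤ γ' i := by
          by_contra hlt
          push_neg at hlt
          have h2 : p ^ e * (γ' i + 1) ≤ p ^ e * δ i := Nat.mul_le_mul_left _ hlt
          rw [Nat.mul_add, Nat.mul_one] at h2
          have h3 := hα i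
          omega
        have h3 : p ^ e * γ' i = p ^ e * (γ' i - δ i) + p ^ e * δ i := by
          rw [← Nat.mul_add]
          congr 1
          omega
        omega

theorem rootFun_one (hq : q ≠ 0) : rootFun (n := n) (p := p) q hq 0 1 = 1 := by
  have h1 : (1 : MvPolynomial (Fin n) (ZMod p)) = monomial (q • (0 : Fin n →₀ ℕ) + 0) 1 := by
    simp
  rw [h1, rootFun_monomial_hit]
  simp

/-- Decomposition of a polynomial over the box. -/
theorem decomposition (hp : p.Prime) (e : ℕ) (hq : p ^ e ≠ 0)
    (g : MvPolynomial (Fin n) (ZMod p)) :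
    g = ∑ α ∈ box n (p ^ e), (rootFun (p ^ e) hq α g) ^ p ^ e * monomial α 1 := by
  haveI := Fact.mk hp
  induction g using MvPolynomial.induction_on' with
  | add g₁ g₂ ih1 ih2 =>
    conv_lhs => rw [ih1, ih2]
    rw [← Finset.sum_add_distrib]
    apply Finset.sum_congr rfl
    intro α _
    rw [rootFun_add, add_pow_char_pow _ _ p e, add_mul]
  | monomial u a =>
    set α₀ : Fin n →₀ ℕ := Finsupp.mapRange (· % p ^ e) (Nat.zero_mod _) u with hα₀
    set γ₀ : Fin n →₀ ℕ := Finsupp.mapRange (· / p ^ e) (Nat.zero_div _) u with hγ₀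
    have hu : u = p ^ e • γ₀ + α₀ := by
      ext i
      simp only [Finsupp.add_apply, Finsupp.smul_apply, smul_eq_mul, hα₀, hγ₀,
        Finsupp.mapRange_apply]
      exact (Nat.div_add_mod (u i) (p ^ e)).symm
    have hmem : α₀ ∈ box n (p ^ e) := by
      rw [mem_box hq]
      intro i
      simp only [hα₀, Finsupp.mapRange_apply]
      exact Nat.mod_lt _ (Nat.pos_of_ne_zero hq)
    rw [Finset.sum_eq_single α₀]
    · rw [hu, rootFun_monomial_hit, monomial_pow, monomial_mul, fermat hp e, mul_one]
    · intro α hαbox hne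
      rw [rootFun_monomial_miss (p ^ e) hq α u a, zero_pow hq, zero_mul]
      intro γ heq
      apply hne
      ext i
      have h1 := DFunLike.congr_fun heq i
      simp only [Finsupp.add_apply, Finsupp.smul_apply, smul_eq_mul] at h1
      have hlt := (mem_box hq α).mp hαbox i
      simp only [hα₀, Finsupp.mapRange_apply]
      rw [h1, Nat.mul_add_mod, Nat.mod_eq_of_lt hlt]
    · intro habs
      exact absurd hmem habs

/-- The `q`-th root ideal of `g`. -/
noncomputable def Iq (q : ℕ) (hq : q ≠ 0) (g : MvPolynomial (Fin n) (ZMod p)) :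
    Ideal (MvPolynomial (Fin n) (ZMod p)) :=
  Ideal.span ((fun α => rootFun q hq α g) '' {α | ∀ i, α i < q})

theorem fp_mono {R : Type*} [CommRing R] {J K : Ideal R} (h : J ≤ K) (q : ℕ) :
    frobeniusPower J q ≤ frobeniusPower K q :=
  Ideal.span_mono (Set.image_mono h)

theorem pow_mem_fp {R : Type*} [CommRing R] {J : Ideal R} {u : R} (hu : u ∈ J) (q : ℕ) :
    u ^ q ∈ frobeniusPower J q :=
  Ideal.subset_span ⟨u, hu, rfl⟩

theorem mem_fp_self (hp : p.Prime) (e : ℕ) (hq : p ^ e ≠ 0)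
    (g : MvPolynomial (Fin n) (ZMod p)) :
    g ∈ frobeniusPower (Iq (p ^ e) hq g) (p ^ e) := by
  have key : (∑ α ∈ box n (p ^ e), rootFun (p ^ e) hq α g ^ p ^ e * monomial α 1)
      ∈ frobeniusPower (Iq (p ^ e) hq g) (p ^ e) := by
    apply Ideal.sum_mem
    intro α hα
    apply Ideal.mul_mem_right
    apply pow_mem_fp
    exact Ideal.subset_span ⟨α, (mem_box hq α).mp hα, rfl⟩
  rwa [← decomposition hp e hq g] at key

theorem root_mem_of_mem_fp (hp : p.Prime) (e : ℕ) (hq : p ^ e ≠ 0) (α : Fin n →₀ ℕ)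
    (hα : ∀ i, α i < p ^ e) {J : Ideal (MvPolynomial (Fin n) (ZMod p))}
    {y : MvPolynomial (Fin n) (ZMod p)} (hy : y ∈ frobeniusPower J (p ^ e)) :
    rootFun (p ^ e) hq α y ∈ J := by
  have key : ∀ r, rootFun (p ^ e) hq α (r * y) ∈ J := by
    induction hy using Submodule.span_induction with
    | mem x hx =>
      obtain ⟨u, hu, rfl⟩ := hx
      intro r
      rw [mul_comm, rootFun_semilinear hp e hq α hα]
      exact J.mul_mem_right _ hu
    | zero => intro r; rw [mul_zero, rootFun_zero]; exact J.zero_mem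
    | add x z hx hz ihx ihz =>
      intro r
      rw [mul_add, rootFun_add]
      exact J.add_mem (ihx r) (ihz r)
    | smul t x hx ih =>
      intro r
      rw [smul_eq_mul, ← mul_assoc]
      exact ih (r * t)
  simpa using key 1

theorem galois (hp : p.Prime) (e : ℕ) (hq : p ^ e ≠ 0)
    (g : MvPolynomial (Fin n) (ZMod p)) (J : Ideal (MvPolynomial (Fin n) (ZMod p))) :
    Iq (p ^ e) hq g ≤ J ↔ g ∈ frobeniusPower J (p ^ e) := by
  constructor
  · intro h
    exact fp_mono h (p ^ e) (mem_fp_self hp e hq g)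
  · intro h
    rw [Iq, Ideal.span_le]
    rintro y ⟨α, hα, rfl⟩
    exact root_mem_of_mem_fp hp e hq α hα h

theorem pow_p_mem_fp (hp : p.Prime) (q : ℕ) {J : Ideal (MvPolynomial (Fin n) (ZMod p))}
    {x : MvPolynomial (Fin n) (ZMod p)} (hx : x ∈ frobeniusPower J q) :
    x ^ p ∈ frobeniusPower J (q * p) := by
  haveI := Fact.mk hp
  induction hx using Submodule.span_induction with
  | mem y hy =>
    obtain ⟨u, hu, rfl⟩ := hy
    rw [← pow_mul]
    exact pow_mem_fp hu (q * p)
  | zero => rw [zero_pow hp.pos.ne']; exact Ideal.zero_mem _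
  | add y z hy hz ihy ihz =>
    rw [add_pow_char y z p]
    exact Ideal.add_mem _ ihy ihz
  | smul t y hy ih =>
    rw [smul_eq_mul, mul_pow]
    exact Ideal.mul_mem_left _ _ ih

theorem fp_fp (hp : p.Prime) (q : ℕ) (J : Ideal (MvPolynomial (Fin n) (ZMod p))) :
    frobeniusPower (frobeniusPower J q) p = frobeniusPower J (q * p) := by
  apply le_antisymm
  · rw [frobeniusPower, Ideal.span_le]
    rintro y ⟨x, hx, rfl⟩
    exact pow_p_mem_fp hp q hx
  · rw [frobeniusPower, Ideal.span_le]
    rintro y ⟨u, hu, rfl⟩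
    simp only
    rw [pow_mul]
    exact pow_mem_fp (pow_mem_fp hu q) p

theorem fp_fp_pow (hp : p.Prime) (N : ℕ) (J : Ideal (MvPolynomial (Fin n) (ZMod p))) (i : ℕ) :
    frobeniusPower (frobeniusPower J (p ^ N)) (p ^ i) = frobeniusPower J (p ^ (N + i)) := by
  induction i with
  | zero =>
    rw [pow_zero, Nat.add_zero]
    apply le_antisymm
    · rw [frobeniusPower, Ideal.span_le]
      rintro y ⟨x, hx, rfl⟩
      simpa using hx
    · intro y hy
      apply Ideal.subset_span
      exact ⟨y, hy, pow_one y⟩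
  | succ i ih =>
    rw [pow_succ, ← fp_fp hp, ih, fp_fp hp, ← pow_succ]
    rw [Nat.add_assoc]

theorem extract_p (hp : p.Prime) {W : Ideal (MvPolynomial (Fin n) (ZMod p))}
    {x : MvPolynomial (Fin n) (ZMod p)} (hx : x ^ p ∈ frobeniusPower W p) : x ∈ W := by
  have hq : p ^ 1 ≠ 0 := pow_ne_zero 1 hp.pos.ne'
  have h0 : ∀ i : Fin n, (0 : Fin n →₀ ℕ) i < p ^ 1 := by
    intro i; simpa using hp.pos
  have hx' : x ^ p ^ 1 * 1 ∈ frobeniusPower W (p ^ 1) := by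
    rw [pow_one, mul_one]; exact hx
  have := root_mem_of_mem_fp hp 1 hq 0 h0 hx'
  rwa [rootFun_semilinear hp 1 hq 0 h0, rootFun_one, mul_one] at this

/-- The key "tight closure" style lemma: in the regular ring `R`, if a fixed nonzero `f`
multiplies all Frobenius powers of `g` into the corresponding Frobenius powers of `K`,
then `g ∈ K`. -/
theorem tight (hp : p.Prime) (K : Ideal (MvPolynomial (Fin n) (ZMod p)))
    (g f : MvPolynomial (Fin n) (ZMod p)) (hf : f ≠ 0)
    (h : ∀ j : ℕ, f * g ^ p ^ j ∈ frobeniusPower K (p ^ j)) : g ∈ K := by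
  haveI := Fact.mk hp
  by_contra hg
  set C : Ideal (MvPolynomial (Fin n) (ZMod p)) := K.colon (Ideal.span {g}) with hC
  have hC1 : C ≠ ⊤ := by
    intro htop
    have h1 : (1 : MvPolynomial (Fin n) (ZMod p)) ∈ C := htop ▸ Submodule.mem_top
    rw [hC, Ideal.mem_colon_span_singleton, one_mul] at h1
    exact hg h1
  have hfC : ∀ j : ℕ, f ∈ C ^ p ^ j := by
    intro j
    have hq : p ^ j ≠ 0 := pow_ne_zero j hp.pos.ne'
    have hroot : ∀ α : Fin n →₀ ℕ, (∀ i, α i < p ^ j) → rootFun (p ^ j) hq α f ∈ C := by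
      intro α hα
      have hy : g ^ p ^ j * f ∈ frobeniusPower K (p ^ j) := by
        rw [mul_comm]; exact h j
      have h1 := root_mem_of_mem_fp hp j hq α hα hy
      rw [rootFun_semilinear hp j hq α hα] at h1
      rw [hC, Ideal.mem_colon_span_singleton, mul_comm]
      exact h1
    have key : (∑ α ∈ box n (p ^ j), rootFun (p ^ j) hq α f ^ p ^ j * monomial α 1)
        ∈ C ^ p ^ j := by
      apply Ideal.sum_mem
      intro α hα
      exact Ideal.mul_mem_right _ _
        (Ideal.pow_mem_pow (hroot α ((mem_box hq α).mp hα)) _)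
    rwa [← decomposition hp j hq f] at key
  have hbot : f ∈ (⊥ : Ideal (MvPolynomial (Fin n) (ZMod p))) := by
    rw [← Ideal.iInf_pow_eq_bot_of_isDomain C hC1]
    rw [Submodule.mem_iInf]
    intro k
    exact Ideal.pow_le_pow_right (le_of_lt (Nat.lt_pow_self (n := k) hp.one_lt)) (hfC k)
  exact hf (by simpa using hbot)

theorem Iq_pow_p (hp : p.Prime) (e : ℕ) (hq : p ^ e ≠ 0) (hq' : p ^ (e + 1) ≠ 0)
    (g : MvPolynomial (Fin n) (ZMod p)) :
    Iq (p ^ (e + 1)) hq' (g ^ p) = Iq (p ^ e) hq g := by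
  apply le_antisymm
  · rw [galois hp (e + 1) hq']
    have h2 := pow_p_mem_fp hp (p ^ e) (mem_fp_self hp e hq g)
    rwa [← pow_succ] at h2
  · rw [galois hp e hq]
    have h1 := mem_fp_self hp (e + 1) hq' (g ^ p)
    have h1' : g ^ p ∈ frobeniusPower
        (frobeniusPower (Iq (p ^ (e + 1)) hq' (g ^ p)) (p ^ e)) p := by
      rw [fp_fp hp (p ^ e), ← pow_succ]
      exact h1
    exact extract_p hp h1' 

theorem Iq_pow_pow (hp : p.Prime) (e : ℕ) (g : MvPolynomial (Fin n) (ZMod p)) (j : ℕ) :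
    Iq (p ^ (e + j)) (pow_ne_zero _ hp.pos.ne') (g ^ p ^ j)
      = Iq (p ^ e) (pow_ne_zero _ hp.pos.ne') g := by
  induction j with
  | zero =>
    rw [pow_zero, pow_one]
    rfl
  | succ j ih =>
    have h1 : g ^ p ^ (j + 1) = (g ^ p ^ j) ^ p := by rw [← pow_mul, pow_succ]
    rw [show e + (j + 1) = (e + j) + 1 from rfl, h1,
      Iq_pow_p hp (e + j) (pow_ne_zero _ hp.pos.ne') (pow_ne_zero _ hp.pos.ne'), ih]

theorem testIdeal_eq_Iq (hp : p.Prime) (f : MvPolynomial (Fin n) (ZMod p)) (a e : ℕ)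
    (hq : p ^ e ≠ 0) :
    testIdeal p n f a e = Iq (p ^ e) hq (f ^ a) := by
  apply le_antisymm
  · rw [testIdeal, Ideal.span_le]
    rintro y ⟨ψ, ⟨hadd, hlin⟩, rfl⟩
    set τ := Iq (p ^ e) hq (f ^ a) with hτ
    let F : MvPolynomial (Fin n) (ZMod p) →+ MvPolynomial (Fin n) (ZMod p) :=
      AddMonoidHom.mk' ψ hadd
    have hstep : ψ (f ^ a)
        = F (∑ α ∈ box n (p ^ e), rootFun (p ^ e) hq α (f ^ a) ^ p ^ e * monomial α 1) :=
      congrArg ψ (decomposition hp e hq (f ^ a))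
    rw [hstep, map_sum]
    apply Ideal.sum_mem
    intro α hα
    have hterm : F (rootFun (p ^ e) hq α (f ^ a) ^ p ^ e * monomial α 1)
        = rootFun (p ^ e) hq α (f ^ a) * ψ (monomial α 1) := hlin _ _
    rw [hterm]
    exact Ideal.mul_mem_right _ _ (Ideal.subset_span ⟨α, (mem_box hq α).mp hα, rfl⟩)
  · rw [Iq, Ideal.span_le]
    rintro y ⟨α, hα, rfl⟩
    apply Ideal.subset_span
    exact ⟨rootFun (p ^ e) hq α,
      ⟨fun x y => rootFun_add (p ^ e) hq α x y,
       fun r s => rootFun_semilinear hp e hq α hα r s⟩, rfl⟩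

theorem chain_step (hp : p.Prime) (f : MvPolynomial (Fin n) (ZMod p)) (a e j : ℕ) :
    Iq (p ^ (e + j)) (pow_ne_zero _ hp.pos.ne') (f ^ (a * p ^ j + 1)) ≤
      Iq (p ^ (e + (j + 1))) (pow_ne_zero _ hp.pos.ne') (f ^ (a * p ^ (j + 1) + 1)) := by
  haveI := Fact.mk hp
  set K := Iq (p ^ (e + (j + 1))) (pow_ne_zero _ hp.pos.ne') (f ^ (a * p ^ (j + 1) + 1))
    with hK
  rw [galois hp (e + j)]
  have h1 : f ^ (a * p ^ (j + 1) + 1) ∈ frobeniusPower K (p ^ (e + (j + 1))) :=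
    mem_fp_self hp _ _ _
  have hpow : (f ^ (a * p ^ j + 1)) ^ p = f ^ (p - 1) * f ^ (a * p ^ (j + 1) + 1) := by
    rw [← pow_mul, ← pow_add]
    congr 1
    have h2 : (a * p ^ j + 1) * p = a * (p ^ j * p) + p := by ring
    rw [h2, ← pow_succ]
    have := hp.pos
    omega
  have h2 : (f ^ (a * p ^ j + 1)) ^ p ∈ frobeniusPower K (p ^ (e + (j + 1))) := by
    rw [hpow]; exact Ideal.mul_mem_left _ _ h1
  have h3 : (f ^ (a * p ^ j + 1)) ^ p ∈
      frobeniusPower (frobeniusPower K (p ^ (e + j))) p := by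
    rw [fp_fp hp (p ^ (e + j)), ← pow_succ]
    exact h2
  exact extract_p hp h3

theorem testIdeal_stabilizes (p n : ℕ) (hp : p.Prime)
    (f : MvPolynomial (Fin n) (ZMod p)) (hf : f ≠ 0) (a e : ℕ) :
    ∃ N : ℕ, e ≤ N ∧ ∀ m : ℕ, N ≤ m →
      testIdeal p n f (a * p ^ (m - e) + 1) m = testIdeal p n f (a * p ^ (m - e)) m := by
  haveI := Fact.mk hp
  let chain : ℕ →o Ideal (MvPolynomial (Fin n) (ZMod p)) :=
    ⟨fun j => Iq (p ^ (e + j)) (pow_ne_zero _ hp.pos.ne') (f ^ (a * p ^ j + 1)),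
     monotone_nat_of_le_succ (fun j => chain_step hp f a e j)⟩
  obtain ⟨j₀, hj₀⟩ := monotone_stabilizes_iff_noetherian.mpr inferInstance chain
  have hstab : ∀ k, j₀ ≤ k →
      Iq (p ^ (e + j₀)) (pow_ne_zero _ hp.pos.ne') (f ^ (a * p ^ j₀ + 1))
        = Iq (p ^ (e + k)) (pow_ne_zero _ hp.pos.ne') (f ^ (a * p ^ k + 1)) :=
    fun k hk => hj₀ k hk
  have hscale : ∀ j : ℕ, Iq (p ^ (e + j)) (pow_ne_zero _ hp.pos.ne') (f ^ (a * p ^ j))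
      = Iq (p ^ e) (pow_ne_zero _ hp.pos.ne') (f ^ a) := by
    intro j
    rw [show f ^ (a * p ^ j) = (f ^ a) ^ p ^ j from by rw [← pow_mul]]
    exact Iq_pow_pow hp e (f ^ a) j
  refine ⟨e + j₀, Nat.le_add_right _ _, ?_⟩
  intro m hm
  have hme : e ≤ m := le_trans (Nat.le_add_right e j₀) hm
  set j := m - e with hjdef
  have hmj : m = e + j := by omega
  have hjj : j₀ ≤ j := by omega
  rw [testIdeal_eq_Iq hp f _ m (pow_ne_zero _ hp.pos.ne'),
      testIdeal_eq_Iq hp f _ m (pow_ne_zero _ hp.pos.ne'), hmj, hscale j, ← hstab j hjj]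
  -- goal : Iq (p ^ (e + j₀)) _ (f ^ (a * p ^ j₀ + 1)) = Iq (p ^ e) _ (f ^ a)
  apply le_antisymm
  · have h1 : Iq (p ^ (e + j₀)) (pow_ne_zero _ hp.pos.ne') (f ^ (a * p ^ j₀ + 1)) ≤
        Iq (p ^ (e + j₀)) (pow_ne_zero _ hp.pos.ne') (f ^ (a * p ^ j₀)) := by
      rw [galois hp (e + j₀)]
      have h2 := mem_fp_self hp (e + j₀) (pow_ne_zero _ hp.pos.ne') (f ^ (a * p ^ j₀))
      have h3 : f ^ (a * p ^ j₀ + 1) = f ^ (a * p ^ j₀) * f := pow_succ f _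
      rw [h3]
      exact Ideal.mul_mem_right _ _ h2
    exact le_trans h1 (le_of_eq (hscale j₀))
  · rw [← hscale j₀, galois hp (e + j₀)]
    refine tight hp _ _ f hf (fun i => ?_)
    rw [fp_fp_pow hp (e + j₀) _ i]
    have harith : f * (f ^ (a * p ^ j₀)) ^ p ^ i = f ^ (a * p ^ (j₀ + i) + 1) := by
      rw [← pow_mul, mul_assoc, ← pow_add, ← pow_succ']
    rw [harith]
    have hmem := mem_fp_self hp (e + (j₀ + i)) (pow_ne_zero _ hp.pos.ne')
      (f ^ (a * p ^ (j₀ + i) + 1))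
    rw [← hstab (j₀ + i) (Nat.le_add_right _ _)] at hmem
    rwa [show e + (j₀ + i) = (e + j₀) + i from (Nat.add_assoc e j₀ i).symm] at hmem
end

section
/- (Briançon–Skoda for test ideals) Let p be a prime, R = 𝔽_p[x₁,…,xₙ], f ∈ R, and a, e ∈ ℕ. Then τ(f^{(a + p^e)/p^e}) = (f) · τ(f^{a/p^e}); that is, increasing the exponent c = a/p^e by 1 multiplies the test ideal by the principal ideal (f). -/
theorem testIdeal_add_one (p n : ℕ) (hp : p.Prime)
    (f : MvPolynomial (Fin n) (ZMod p)) (a e : ℕ) :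
    testIdeal p n f (a + p ^ e) e = Ideal.span {f} * testIdeal p n f a e := by
  have key : ∀ ψ, IsFrobeniusLinear p n e ψ → ψ (f ^ (a + p ^ e)) = f * ψ (f ^ a) := by
    intro ψ hψ
    have : f ^ (a + p ^ e) = f ^ p ^ e * f ^ a := by ring
    rw [this, hψ.2]
  apply le_antisymm
  · rw [testIdeal, Ideal.span_le]
    rintro y ⟨ψ, hψ, rfl⟩
    rw [key ψ hψ]
    exact Ideal.mul_mem_mul (Ideal.mem_span_singleton_self f)
      (Ideal.subset_span ⟨ψ, hψ, rfl⟩)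
  · rw [Ideal.mul_le]
    intro r hr s hs
    obtain ⟨t, rfl⟩ := Ideal.mem_span_singleton'.mp hr
    have hfs : f * s ∈ testIdeal p n f (a + p ^ e) e := by
      refine Submodule.span_induction ?_ ?_ ?_ ?_ hs
      · rintro y ⟨ψ, hψ, rfl⟩
        exact Ideal.subset_span ⟨ψ, hψ, key ψ hψ⟩
      · simp
      · intro x y _ _ hx hy
        rw [mul_add]; exact Ideal.add_mem _ hx hy
      · intro c x _ hx
        rw [smul_eq_mul, mul_left_comm]
        exact Ideal.mul_mem_left _ _ hx
    have : t * f * s = t * (f * s) := by ring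
    rw [this]
    exact Ideal.mul_mem_left _ _ hfs
end

section
/- Let p be a prime, R = 𝔽_p[x₁,…,xₙ], and f ∈ R nonzero. If a real number c > 0 is an F-jumping number of f, then p·c is also an F-jumping number of f. Moreover, the set of F-jumping numbers of f has no accumulation point in ℝ, and every F-jumping number of f is a rational number. -/
/-- The test ideal `τ(f^c)` for an arbitrary real exponent `c`:
`τ(f^c) = ⋃ₑ τ(f^{⌈c·pᵉ⌉/pᵉ})` (the supremum of this increasing family of ideals);
for `c ≤ 0` this is the unit ideal `R`. -/
noncomputable def testIdealReal (p n : ℕ) (f : MvPolynomial (Fin n) (ZMod p)) (c : ℝ) :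
    Ideal (MvPolynomial (Fin n) (ZMod p)) :=
  ⨆ e : ℕ, testIdeal p n f ⌈c * (p : ℝ) ^ e⌉₊ e

/-- `c > 0` is an F-jumping number of `f` if `τ(f^{c-ε}) ≠ τ(f^c)` for every
`ε` with `0 < ε ≤ c`. -/
def IsFJumpingNumber (p n : ℕ) (f : MvPolynomial (Fin n) (ZMod p)) (c : ℝ) : Prop :=
  0 < c ∧ ∀ ε : ℝ, 0 < ε → ε ≤ c →
    testIdealReal p n f (c - ε) ≠ testIdealReal p n f c


open MvPolynomial

namespace FJN

variable {p n : ℕ}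

noncomputable def mdiv (q : ℕ) (m : Fin n →₀ ℕ) : Fin n →₀ ℕ := m.mapRange (· / q) (Nat.zero_div q)
noncomputable def mmod (q : ℕ) (m : Fin n →₀ ℕ) : Fin n →₀ ℕ := m.mapRange (· % q) (Nat.zero_mod q)

@[simp] lemma mdiv_apply (q : ℕ) (m : Fin n →₀ ℕ) (i : Fin n) : mdiv q m i = m i / q := rfl
@[simp] lemma mmod_apply (q : ℕ) (m : Fin n →₀ ℕ) (i : Fin n) : mmod q m i = m i % q := rfl

lemma mdiv_add_mmod (q : ℕ) (m : Fin n →₀ ℕ) : q • mdiv q m + mmod q m = m := by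
  ext i; simp [Nat.div_add_mod]

lemma mdiv_smul_add (q : ℕ) (hq : 0 < q) (u α : Fin n →₀ ℕ) :
    mdiv q (q • u + α) = u + mdiv q α := by
  ext i
  simp only [mdiv_apply, Finsupp.add_apply, Finsupp.smul_apply, smul_eq_mul]
  rw [Nat.add_comm, Nat.mul_comm, Nat.add_mul_div_right _ _ hq, Nat.add_comm]

lemma mmod_smul_add (q : ℕ) (u α : Fin n →₀ ℕ) :
    mmod q (q • u + α) = mmod q α := by
  ext i
  simp only [mmod_apply, Finsupp.add_apply, Finsupp.smul_apply, smul_eq_mul]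
  rw [Nat.add_comm, Nat.add_mul_mod_self_left]

lemma mmod_eq_self_iff {q : ℕ} (hq : 0 < q) (α : Fin n →₀ ℕ) :
    mmod q α = α ↔ ∀ i, α i < q := by
  constructor
  · intro h i
    have h2 : α i % q = α i := by
      have := congrArg (fun φ : Fin n →₀ ℕ => φ i) h; simpa using this
    rw [← h2]; exact Nat.mod_lt _ hq
  · intro h; ext i; exact Nat.mod_eq_of_lt (h i)

lemma mmod_mmod (q : ℕ) (m : Fin n →₀ ℕ) : mmod q (mmod q m) = mmod q m := by
  ext i; exact Nat.mod_mod_of_dvd _ dvd_rfl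

@[simp] lemma mmod_zero (q : ℕ) : mmod q (0 : Fin n →₀ ℕ) = 0 := by ext i; simp
@[simp] lemma mdiv_zero (q : ℕ) : mdiv q (0 : Fin n →₀ ℕ) = 0 := by ext i; simp

lemma smul_add_eq_iff {q : ℕ} (hq : 0 < q) {u α m : Fin n →₀ ℕ} :
    m = q • u + α ∧ mmod q α = α ↔ mmod q m = α ∧ mdiv q m = u := by
  constructor
  · rintro ⟨rfl, h⟩
    refine ⟨by rw [mmod_smul_add, h], ?_⟩
    rw [mdiv_smul_add q hq]
    have : mdiv q α = 0 := by
      ext i; simp [Nat.div_eq_of_lt ((mmod_eq_self_iff hq α).1 h i)]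
    simp [this]
  · rintro ⟨h1, h2⟩
    have hm := mdiv_add_mmod q m
    rw [h1, h2] at hm
    refine ⟨hm.symm, ?_⟩
    rw [← h1]; exact mmod_mmod q m

/-- extraction of the `α`-component `q`-th root coefficient of a polynomial. -/
noncomputable def rootFun (q : ℕ) (α : Fin n →₀ ℕ) (g : MvPolynomial (Fin n) (ZMod p)) :
    MvPolynomial (Fin n) (ZMod p) :=
  ∑ m ∈ g.support, if mmod q m = α then monomial (mdiv q m) (coeff m g) else 0

lemma coeff_rootFun {q : ℕ} (hq : 0 < q) (α : Fin n →₀ ℕ) (g : MvPolynomial (Fin n) (ZMod p))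
    (u : Fin n →₀ ℕ) :
    coeff u (rootFun q α g) =
      if mmod q α = α then coeff (q • u + α) g else 0 := by
  rw [rootFun, coeff_sum]
  by_cases hα : mmod q α = α
  · rw [if_pos hα]
    have hterm : ∀ m ∈ g.support,
        coeff u (if mmod q m = α then monomial (mdiv q m) (coeff m g) else 0) =
          if m = q • u + α then coeff m g else 0 := by
      intro m _
      rw [apply_ite (coeff u), coeff_monomial, coeff_zero]
      by_cases h : m = q • u + α
      · subst h
        have := (smul_add_eq_iff hq (u := u) (α := α) (m := q • u + α)).1 ⟨rfl, hα⟩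
        rw [if_pos this.1, if_pos this.2, if_pos rfl]
      · rw [if_neg h]
        by_cases h1 : mmod q m = α
        · by_cases h2 : mdiv q m = u
          · exact absurd ((smul_add_eq_iff hq).2 ⟨h1, h2⟩).1 h
          · rw [if_pos h1, if_neg h2]
        · rw [if_neg h1]
    rw [Finset.sum_congr rfl hterm, Finset.sum_ite_eq' g.support (q • u + α) (fun m => coeff m g)]
    by_cases hmem : q • u + α ∈ g.support
    · rw [if_pos hmem]
    · rw [if_neg hmem, (notMem_support_iff).1 hmem]
  · rw [if_neg hα]
    refine Finset.sum_eq_zero fun m _ => ?_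
    have : mmod q m ≠ α := by
      intro h; exact hα (by rw [← h, mmod_mmod])
    rw [if_neg this, coeff_zero]

lemma rootFun_add {q : ℕ} (hq : 0 < q) (α : Fin n →₀ ℕ)
    (g h : MvPolynomial (Fin n) (ZMod p)) :
    rootFun q α (g + h) = rootFun q α g + rootFun q α h := by
  apply MvPolynomial.ext
  intro u
  simp only [coeff_add, coeff_rootFun hq]
  split <;> simp

lemma rootFun_monomial {q : ℕ} (α v : Fin n →₀ ℕ) (d : ZMod p) :
    rootFun q α (monomial v d) =
      if mmod q v = α then monomial (mdiv q v) d else 0 := by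
  by_cases hd : d = 0
  · subst hd; simp [rootFun]
  · rw [rootFun, support_monomial, if_neg hd, Finset.sum_singleton, coeff_monomial, if_pos rfl]


lemma q_pos (hp : p.Prime) (e : ℕ) : 0 < p ^ e := pow_pos hp.pos e

lemma zmod_pow_q (hp : p.Prime) (e : ℕ) (c : ZMod p) : c ^ p ^ e = c := by
  haveI := Fact.mk hp
  induction e with
  | zero => simp
  | succ e ih => rw [pow_succ, pow_mul, ih, ZMod.pow_card]

lemma coeff_pow_q (hp : p.Prime) (e : ℕ) (h : MvPolynomial (Fin n) (ZMod p)) (u : Fin n →₀ ℕ) :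
    coeff u (h ^ p ^ e) =
      if mmod (p ^ e) u = 0 then coeff (mdiv (p ^ e) u) h else 0 := by
  haveI := Fact.mk hp
  set q := p ^ e with hqdef
  have hq : 0 < q := q_pos hp e
  induction h using MvPolynomial.induction_on' with
  | monomial m c =>
    rw [monomial_pow, zmod_pow_q hp, coeff_monomial]
    have hiff : u = q • m ↔ mmod q u = 0 ∧ mdiv q u = m := by
      have := smul_add_eq_iff hq (u := m) (α := 0) (m := u)
      simpa using this
    by_cases h0 : mmod q u = 0
    · rw [if_pos h0, coeff_monomial]
      by_cases h1 : mdiv q u = m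
      · rw [if_pos ((hiff.2 ⟨h0, h1⟩).symm), if_pos h1.symm]
      · rw [if_neg (fun h => h1 (hiff.1 h.symm).2), if_neg (fun h => h1 h.symm)]
    · rw [if_neg h0, if_neg (fun h => h0 (hiff.1 h.symm).1)]
  | add g1 g2 ih1 ih2 =>
    rw [add_pow_char_pow g1 g2 p e, coeff_add, ih1, ih2]
    split <;> simp

lemma rootFun_pow_mul_monomial (hp : p.Prime) (e : ℕ) (α : Fin n →₀ ℕ)
    (r : MvPolynomial (Fin n) (ZMod p)) (v : Fin n →₀ ℕ) (d : ZMod p) :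
    rootFun (p ^ e) α (r ^ p ^ e * monomial v d) = r * rootFun (p ^ e) α (monomial v d) := by
  haveI := Fact.mk hp
  have hq : 0 < p ^ e := q_pos hp e
  induction r using MvPolynomial.induction_on' with
  | monomial w c =>
    rw [monomial_pow, zmod_pow_q hp, monomial_mul, rootFun_monomial, rootFun_monomial,
      mmod_smul_add, mdiv_smul_add _ hq]
    by_cases h : mmod (p ^ e) v = α
    · rw [if_pos h, if_pos h, monomial_mul]
    · rw [if_neg h, if_neg h, mul_zero]
  | add r1 r2 ih1 ih2 =>
    rw [add_pow_char_pow r1 r2 p e, add_mul, rootFun_add hq, ih1, ih2, add_mul]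

lemma rootFun_pow_mul (hp : p.Prime) (e : ℕ) (α : Fin n →₀ ℕ)
    (r s : MvPolynomial (Fin n) (ZMod p)) :
    rootFun (p ^ e) α (r ^ p ^ e * s) = r * rootFun (p ^ e) α s := by
  have hq : 0 < p ^ e := q_pos hp e
  induction s using MvPolynomial.induction_on' with
  | monomial v d => exact rootFun_pow_mul_monomial hp e α r v d
  | add s1 s2 ih1 ih2 => rw [mul_add, rootFun_add hq, ih1, ih2, rootFun_add hq, mul_add]

lemma rootFun_isFrobeniusLinear (hp : p.Prime) (e : ℕ) (α : Fin n →₀ ℕ) :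
    IsFrobeniusLinear p n e (rootFun (p ^ e) α) :=
  ⟨fun x y => rootFun_add (q_pos hp e) α x y, fun r s => rootFun_pow_mul hp e α r s⟩

lemma rootFun_zero_pow (hp : p.Prime) (e : ℕ) (g : MvPolynomial (Fin n) (ZMod p)) :
    rootFun (p ^ e) 0 (g ^ p ^ e) = g := by
  have hq : 0 < p ^ e := q_pos hp e
  apply MvPolynomial.ext
  intro u
  rw [coeff_rootFun hq, if_pos (mmod_zero _), add_zero, coeff_pow_q hp]
  have h1 : mmod (p ^ e) ((p ^ e) • u) = 0 := by
    rw [← add_zero ((p ^ e) • u), mmod_smul_add, mmod_zero]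
  have h2 : mdiv (p ^ e) ((p ^ e) • u) = u := by
    rw [← add_zero ((p ^ e) • u), mdiv_smul_add _ hq, mdiv_zero, add_zero]
  rw [if_pos h1, h2]

/-- The `q = pᵉ` root decomposition of a polynomial. -/
lemma sum_rootFun (hp : p.Prime) (e : ℕ) (g : MvPolynomial (Fin n) (ZMod p)) :
    ∑ α ∈ g.support.image (mmod (p ^ e)),
      (rootFun (p ^ e) α g) ^ p ^ e * monomial α 1 = g := by
  haveI := Fact.mk hp
  set q := p ^ e with hqdef
  have hq : 0 < q := q_pos hp e
  apply MvPolynomial.ext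
  intro u
  rw [coeff_sum]
  have hterm : ∀ α ∈ g.support.image (mmod q),
      coeff u ((rootFun q α g) ^ q * monomial α 1) =
        if α = mmod q u then coeff u g else 0 := by
    intro α hα
    have hαs : mmod q α = α := by
      obtain ⟨m0, _, rfl⟩ := Finset.mem_image.1 hα
      exact mmod_mmod q m0
    have hlt : ∀ i, α i < q := (mmod_eq_self_iff hq α).1 hαs
    rw [coeff_mul_monomial']
    by_cases hc : α = mmod q u
    · have hle : α ≤ u := by
        rw [hc]; exact Finsupp.le_def.2 fun i => Nat.mod_le _ _
      have hsub : ∀ i : Fin n, u i - α i = q * (u i / q) := by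
        intro i
        have hd := Nat.div_add_mod (u i) q
        have : α i = u i % q := by rw [hc]; rfl
        omega
      have hm0 : mmod q (u - α) = 0 := by
        ext i
        simp only [mmod_apply, Finsupp.tsub_apply, Finsupp.coe_zero, Pi.zero_apply]
        rw [hsub i, Nat.mul_mod_right]
      have hdiv : mdiv q (u - α) = mdiv q u := by
        ext i
        simp only [mdiv_apply, Finsupp.tsub_apply]
        rw [hsub i, Nat.mul_div_cancel_left _ hq]
      rw [if_pos hle, hqdef, coeff_pow_q hp, ← hqdef, if_pos hm0, hdiv, coeff_rootFun hq,
        if_pos hαs, hc, mdiv_add_mmod, if_pos rfl, mul_one]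
    · rw [if_neg hc]
      by_cases hle : α ≤ u
      · rw [if_pos hle, hqdef, coeff_pow_q hp, ← hqdef]
        by_cases hm0 : mmod q (u - α) = 0
        · exfalso
          apply hc
          ext i
          have h1 : (u i - α i) % q = 0 := by
            have := congrArg (fun φ : Fin n →₀ ℕ => φ i) hm0
            simpa using this
          obtain ⟨k, hk⟩ := Nat.dvd_of_mod_eq_zero h1
          have hαu : α i ≤ u i := Finsupp.le_def.1 hle i
          have hu : u i = q * k + α i := by omega
          rw [mmod_apply, hu, Nat.mul_add_mod, Nat.mod_eq_of_lt (hlt i)]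
        · rw [if_neg hm0, zero_mul]
      · rw [if_neg hle]
  rw [Finset.sum_congr rfl hterm, Finset.sum_ite_eq' (g.support.image (mmod q)) (mmod q u)
    (fun _ => coeff u g)]
  by_cases hmem : mmod q u ∈ g.support.image (mmod q)
  · rw [if_pos hmem]
  · rw [if_neg hmem]
    by_contra hne
    exact hmem (Finset.mem_image_of_mem _ (mem_support_iff.2 fun h => hne h.symm))

section TestIdealLemmas

/-- wrap an additive map into an `AddMonoidHom` -/
private noncomputable def addHomOf (ψ : MvPolynomial (Fin n) (ZMod p) → MvPolynomial (Fin n) (ZMod p))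
    (h : ∀ x y, ψ (x + y) = ψ x + ψ y) :
    MvPolynomial (Fin n) (ZMod p) →+ MvPolynomial (Fin n) (ZMod p) :=
  AddMonoidHom.mk' ψ h

lemma frob_map_zero {e : ℕ} {ψ : MvPolynomial (Fin n) (ZMod p) → MvPolynomial (Fin n) (ZMod p)}
    (hψ : IsFrobeniusLinear p n e ψ) : ψ 0 = 0 :=
  (addHomOf ψ hψ.1).map_zero

lemma frob_map_sum {e : ℕ} {ψ : MvPolynomial (Fin n) (ZMod p) → MvPolynomial (Fin n) (ZMod p)}
    (hψ : IsFrobeniusLinear p n e ψ) {ι : Type*} (s : Finset ι)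
    (g : ι → MvPolynomial (Fin n) (ZMod p)) :
    ψ (∑ i ∈ s, g i) = ∑ i ∈ s, ψ (g i) :=
  map_sum (addHomOf ψ hψ.1) g s

/-- Structure theorem: the test ideal is generated by the root coefficients of `f^a`. -/
lemma testIdeal_eq_span_rootFun (hp : p.Prime) (f : MvPolynomial (Fin n) (ZMod p)) (a e : ℕ) :
    testIdeal p n f a e = Ideal.span (Set.range fun α : Fin n →₀ ℕ => rootFun (p ^ e) α (f ^ a)) := by
  apply le_antisymm
  · rw [testIdeal, Ideal.span_le]
    rintro y ⟨ψ, hψ, rfl⟩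
    have hdec : ψ (f ^ a) = ∑ α ∈ Finset.image (mmod (p ^ e)) (f ^ a).support,
        ψ (rootFun (p ^ e) α (f ^ a) ^ p ^ e * monomial α 1) := by
      rw [← frob_map_sum hψ]
      exact congrArg ψ (sum_rootFun hp e (f ^ a)).symm
    rw [hdec]
    apply Ideal.sum_mem
    intro α hα
    rw [hψ.2 (rootFun (p ^ e) α (f ^ a)) (monomial α 1)]
    exact Ideal.mul_mem_right _ _ (Ideal.subset_span ⟨α, rfl⟩)
  · rw [Ideal.span_le]
    rintro y ⟨α, rfl⟩
    exact Ideal.subset_span ⟨rootFun (p ^ e) α, rootFun_isFrobeniusLinear hp e α, rfl⟩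

/-- The test ideal is antitone in the exponent `a`. -/
lemma testIdeal_antitone (f : MvPolynomial (Fin n) (ZMod p)) {a b e : ℕ} (hab : a ≤ b) :
    testIdeal p n f b e ≤ testIdeal p n f a e := by
  rw [testIdeal, Ideal.span_le]
  rintro y ⟨ψ, hψ, rfl⟩
  refine Ideal.subset_span ⟨fun s => ψ (f ^ (b - a) * s), ⟨?_, ?_⟩, ?_⟩
  · intro x y; show ψ (f ^ (b - a) * (x + y)) = _; rw [mul_add, hψ.1]
  · intro r s
    show ψ (f ^ (b - a) * (r ^ p ^ e * s)) = _
    rw [show f ^ (b - a) * (r ^ p ^ e * s) = r ^ p ^ e * (f ^ (b - a) * s) by ring, hψ.2]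
  · show ψ (f ^ (b - a) * f ^ a) = _
    rw [← pow_add, Nat.sub_add_cancel hab]

/-- The test ideal increases from level `e` to level `e+1` when `a` is multiplied by `p`. -/
lemma testIdeal_le_succ (hp : p.Prime) (f : MvPolynomial (Fin n) (ZMod p)) (a e : ℕ) :
    testIdeal p n f a e ≤ testIdeal p n f (p * a) (e + 1) := by
  rw [testIdeal, Ideal.span_le]
  rintro y ⟨ψ, hψ, rfl⟩
  refine Ideal.subset_span ⟨fun s => ψ (rootFun (p ^ 1) 0 s), ⟨?_, ?_⟩, ?_⟩
  · intro x y
    show ψ (rootFun (p ^ 1) 0 (x + y)) = _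
    rw [rootFun_add (q_pos hp 1) 0 x y, hψ.1]
  · intro r s
    show ψ (rootFun (p ^ 1) 0 (r ^ p ^ (e + 1) * s)) = _
    have h1 : r ^ p ^ (e + 1) * s = (r ^ p ^ e) ^ p ^ 1 * s := by
      rw [← pow_mul, pow_one, ← pow_succ]
    rw [h1, rootFun_pow_mul hp 1 0 (r ^ p ^ e) s, hψ.2]
  · show ψ (rootFun (p ^ 1) 0 (f ^ (p * a))) = _
    have h1 : f ^ (p * a) = (f ^ a) ^ p ^ 1 := by rw [← pow_mul, pow_one, Nat.mul_comm]
    rw [h1, rootFun_zero_pow hp 1]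

/-- The `p`-th root operation on ideals. -/
noncomputable def rootIdeal (J : Ideal (MvPolynomial (Fin n) (ZMod p))) : Ideal (MvPolynomial (Fin n) (ZMod p)) :=
  Ideal.span {y | ∃ ψ, IsFrobeniusLinear p n 1 ψ ∧ ∃ g ∈ J, ψ g = y}

lemma testIdeal_succ_eq_rootIdeal (hp : p.Prime) (f : MvPolynomial (Fin n) (ZMod p)) (a e : ℕ) :
    testIdeal p n f a (e + 1) = rootIdeal (testIdeal p n f a e) := by
  haveI := Fact.mk hp
  apply le_antisymm
  · rw [testIdeal, Ideal.span_le]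
    rintro y ⟨φ, hφ, rfl⟩
    have hdec : φ (f ^ a) = ∑ α ∈ Finset.image (mmod (p ^ e)) (f ^ a).support,
        φ (rootFun (p ^ e) α (f ^ a) ^ p ^ e * monomial α 1) := by
      rw [← frob_map_sum hφ]
      exact congrArg φ (sum_rootFun hp e (f ^ a)).symm
    rw [hdec]
    apply Ideal.sum_mem
    intro α hα
    apply Ideal.subset_span
    refine ⟨fun s => φ (s ^ p ^ e * monomial α 1), ⟨?_, ?_⟩, rootFun (p ^ e) α (f ^ a), ?_, rfl⟩
    · intro x y
      show φ ((x + y) ^ p ^ e * monomial α 1) = _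
      rw [add_pow_char_pow x y p e, add_mul, hφ.1]
    · intro r s
      show φ ((r ^ p ^ 1 * s) ^ p ^ e * monomial α 1) = _
      have h1 : (r ^ p ^ 1 * s) ^ p ^ e * monomial α 1
          = r ^ p ^ (e + 1) * (s ^ p ^ e * monomial α 1) := by
        rw [mul_pow, ← pow_mul, pow_one, ← pow_succ']
        ring
      rw [h1, hφ.2]
    · exact Ideal.subset_span ⟨rootFun (p ^ e) α, rootFun_isFrobeniusLinear hp e α, rfl⟩
  · rw [rootIdeal, Ideal.span_le]
    rintro y ⟨ψ, hψ, g, hg, rfl⟩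
    revert ψ
    have key : ∀ g ∈ testIdeal p n f a e, ∀ ψ, IsFrobeniusLinear p n 1 ψ →
        ψ g ∈ testIdeal p n f a (e + 1) := by
      intro g hg
      induction hg using Submodule.span_induction with
      | mem x hx =>
        intro ψ hψ
        obtain ⟨χ, hχ, rfl⟩ := hx
        refine Ideal.subset_span ⟨fun s => ψ (χ s), ⟨?_, ?_⟩, rfl⟩
        · intro x y; show ψ (χ (x + y)) = _; rw [hχ.1, hψ.1]
        · intro r s
          show ψ (χ (r ^ p ^ (e + 1) * s)) = _
          have h1 : r ^ p ^ (e + 1) * s = (r ^ p) ^ p ^ e * s := by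
            rw [← pow_mul, ← pow_succ']
          rw [h1, hχ.2]
          have h2 := hψ.2 r (χ s)
          rw [pow_one] at h2
          exact h2
      | zero => intro ψ hψ; rw [frob_map_zero hψ]; exact Ideal.zero_mem _
      | add x y hx hy ihx ihy =>
        intro ψ hψ
        rw [hψ.1]
        exact Ideal.add_mem _ (ihx ψ hψ) (ihy ψ hψ)
      | smul r x hx ih =>
        intro ψ hψ
        rw [smul_eq_mul]
        refine ih (fun s => ψ (r * s)) ⟨?_, ?_⟩
        · intro x y; show ψ (r * (x + y)) = _; rw [mul_add, hψ.1]
        · intro t s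
          show ψ (r * (t ^ p ^ 1 * s)) = _
          rw [show r * (t ^ p ^ 1 * s) = t ^ p ^ 1 * (r * s) by ring, hψ.2]
    exact fun ψ hψ => key g hg ψ hψ

/-- Skoda-type lemma at finite level. -/
lemma testIdeal_add_q (f : MvPolynomial (Fin n) (ZMod p)) (a e : ℕ) :
    testIdeal p n f (a + p ^ e) e =
      Submodule.map (LinearMap.mulLeft (MvPolynomial (Fin n) (ZMod p)) f) (testIdeal p n f a e) := by
  rw [testIdeal, testIdeal, ← Ideal.submodule_span_eq, ← Ideal.submodule_span_eq, Submodule.map_span]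
  congr 1
  ext y
  constructor
  · rintro ⟨ψ, hψ, rfl⟩
    refine ⟨ψ (f ^ a), ⟨ψ, hψ, rfl⟩, ?_⟩
    have : f ^ (a + p ^ e) = f ^ p ^ e * f ^ a := by rw [← pow_add]; ring_nf
    rw [this, hψ.2 f (f ^ a)]
    rfl
  · rintro ⟨z, ⟨ψ, hψ, rfl⟩, rfl⟩
    refine ⟨ψ, hψ, ?_⟩
    have : f ^ (a + p ^ e) = f ^ p ^ e * f ^ a := by rw [← pow_add]; ring_nf
    rw [this, hψ.2 f (f ^ a)]
    rfl

end TestIdealLemmas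

section Degree

lemma totalDegree_rootFun_mul_le {q : ℕ} (hq : 0 < q) (α : Fin n →₀ ℕ)
    (g : MvPolynomial (Fin n) (ZMod p)) :
    (rootFun q α g).totalDegree * q ≤ g.totalDegree := by
  have h1 : (rootFun q α g).totalDegree ≤ g.totalDegree / q := by
    rw [totalDegree]
    apply Finset.sup_le
    intro m hm
    have hco : coeff m (rootFun q α g) ≠ 0 := mem_support_iff.1 hm
    rw [coeff_rootFun hq] at hco
    by_cases hα : mmod q α = α
    · rw [if_pos hα] at hco
      have hmem : (q • m + α) ∈ g.support := mem_support_iff.2 hco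
      have hle := le_totalDegree hmem
      rw [Nat.le_div_iff_mul_le hq]
      refine le_trans ?_ hle
      rw [Finsupp.sum_fintype _ _ (fun _ => rfl), Finsupp.sum_fintype _ _ (fun _ => rfl)]
      calc (∑ i, m i) * q = ∑ i, m i * q := by rw [Finset.sum_mul]
        _ ≤ ∑ i, (q • m + α) i := by
            apply Finset.sum_le_sum
            intro i _
            simp only [Finsupp.add_apply, Finsupp.smul_apply, smul_eq_mul]
            calc m i * q = q * m i := Nat.mul_comm _ _
              _ ≤ q * m i + α i := Nat.le_add_right _ _
    · rw [if_neg hα] at hco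
      exact absurd rfl hco
  calc (rootFun q α g).totalDegree * q ≤ g.totalDegree / q * q :=
        Nat.mul_le_mul_right q h1
    _ ≤ g.totalDegree := Nat.div_mul_le_self _ _

end Degree

section RealLevel

variable (p n) in
/-- The `e`-th term of the family defining `testIdealReal`. -/
noncomputable def Aseq (f : MvPolynomial (Fin n) (ZMod p)) (c : ℝ) (e : ℕ) :
    Ideal (MvPolynomial (Fin n) (ZMod p)) :=
  testIdeal p n f ⌈c * (p : ℝ) ^ e⌉₊ e

lemma testIdealReal_eq_iSup_Aseq (f : MvPolynomial (Fin n) (ZMod p)) (c : ℝ) :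
    testIdealReal p n f c = ⨆ e, Aseq p n f c e := rfl

lemma ceil_succ_le (hp : p.Prime) (c : ℝ) (e : ℕ) :
    ⌈c * (p : ℝ) ^ (e + 1)⌉₊ ≤ p * ⌈c * (p : ℝ) ^ e⌉₊ := by
  rw [Nat.ceil_le]
  push_cast
  calc c * (p : ℝ) ^ (e + 1) = c * (p : ℝ) ^ e * p := by ring
    _ ≤ (⌈c * (p : ℝ) ^ e⌉₊ : ℝ) * p := by
        apply mul_le_mul_of_nonneg_right (Nat.le_ceil _) (by positivity)
    _ = (p : ℝ) * (⌈c * (p : ℝ) ^ e⌉₊ : ℝ) := by ring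

lemma Aseq_monotone (hp : p.Prime) (f : MvPolynomial (Fin n) (ZMod p)) (c : ℝ) :
    Monotone (Aseq p n f c) := by
  apply monotone_nat_of_le_succ
  intro e
  calc Aseq p n f c e ≤ testIdeal p n f (p * ⌈c * (p : ℝ) ^ e⌉₊) (e + 1) :=
        testIdeal_le_succ hp f _ e
    _ ≤ Aseq p n f c (e + 1) := testIdeal_antitone f (ceil_succ_le hp c e)

lemma exists_stab (hp : p.Prime) (g : ℕ → Ideal (MvPolynomial (Fin n) (ZMod p)))
    (hg : Monotone g) : ∃ N, (⨆ e, g e) = g N ∧ ∀ m, N ≤ m → g m = g N := by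
  haveI := Fact.mk hp
  obtain ⟨N, hN⟩ := monotone_stabilizes_iff_noetherian.mpr inferInstance ⟨g, hg⟩
  refine ⟨N, le_antisymm (iSup_le fun e => ?_) (le_iSup g N), fun m hm => (hN m hm).symm⟩
  rcases le_total e N with h | h
  · exact hg h
  · exact le_of_eq (hN e h).symm

lemma testIdealReal_antitone (f : MvPolynomial (Fin n) (ZMod p)) {c c' : ℝ} (h : c' ≤ c) :
    testIdealReal p n f c ≤ testIdealReal p n f c' := by
  apply iSup_mono
  intro e
  apply testIdeal_antitone
  apply Nat.ceil_le_ceil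
  apply mul_le_mul_of_nonneg_right h (by positivity)

/-- Key identity: `τ(f^c) = rootIdeal (τ(f^{pc}))`. -/
lemma testIdealReal_eq_rootIdeal (hp : p.Prime) (f : MvPolynomial (Fin n) (ZMod p)) (c : ℝ) :
    testIdealReal p n f c = rootIdeal (testIdealReal p n f ((p : ℝ) * c)) := by
  obtain ⟨N1, hN1, hN1'⟩ := exists_stab hp _ (Aseq_monotone hp f c)
  obtain ⟨N2, hN2, hN2'⟩ := exists_stab hp _ (Aseq_monotone hp f ((p : ℝ) * c))
  set N := max N1 N2 with hN
  have hc : testIdealReal p n f c = Aseq p n f c (N + 1) := by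
    rw [testIdealReal_eq_iSup_Aseq, hN1, hN1' (N + 1) (le_trans (le_max_left _ _) (Nat.le_succ_of_le le_rfl))]
  have hpc : testIdealReal p n f ((p : ℝ) * c) = Aseq p n f ((p : ℝ) * c) N := by
    rw [testIdealReal_eq_iSup_Aseq, hN2, hN2' N (le_max_right _ _)]
  rw [hc, hpc]
  have harg : (⌈c * (p : ℝ) ^ (N + 1)⌉₊ : ℕ) = ⌈(p : ℝ) * c * (p : ℝ) ^ N⌉₊ := by
    congr 1
    ring
  rw [Aseq, Aseq, harg]
  exact testIdeal_succ_eq_rootIdeal hp f _ N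

/-- Skoda at the real level: `τ(f^{c+1}) = f · τ(f^c)` for `c ≥ 0`. -/
lemma testIdealReal_add_one (hp : p.Prime) (f : MvPolynomial (Fin n) (ZMod p)) {c : ℝ}
    (hc : 0 ≤ c) :
    testIdealReal p n f (c + 1) =
      Submodule.map (LinearMap.mulLeft (MvPolynomial (Fin n) (ZMod p)) f)
        (testIdealReal p n f c) := by
  rw [testIdealReal_eq_iSup_Aseq, testIdealReal_eq_iSup_Aseq, Submodule.map_iSup]
  apply iSup_congr
  intro e
  have harg : ⌈(c + 1) * (p : ℝ) ^ e⌉₊ = ⌈c * (p : ℝ) ^ e⌉₊ + p ^ e := by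
    have h1 : (c + 1) * (p : ℝ) ^ e = c * (p : ℝ) ^ e + (p ^ e : ℕ) := by push_cast; ring
    rw [h1, Nat.ceil_add_natCast (by positivity)]
  rw [Aseq, Aseq, harg]
  exact testIdeal_add_q f _ e

end RealLevel

section Finiteness

lemma testIdealReal_span_bounded (hp : p.Prime) (f : MvPolynomial (Fin n) (ZMod p))
    {M c : ℝ} (hcM : c ≤ M) :
    testIdealReal p n f c = Ideal.span ((testIdealReal p n f c : Set (MvPolynomial (Fin n) (ZMod p)))
      ∩ {g | g.totalDegree ≤ ⌈M⌉₊ * f.totalDegree}) := by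
  obtain ⟨N, hN, -⟩ := exists_stab hp _ (Aseq_monotone hp f c)
  have hEq : testIdealReal p n f c =
      Ideal.span (Set.range fun α : Fin n →₀ ℕ => rootFun (p ^ N) α (f ^ ⌈c * (p : ℝ) ^ N⌉₊)) := by
    rw [testIdealReal_eq_iSup_Aseq, hN, Aseq, testIdeal_eq_span_rootFun hp]
  set S := Set.range fun α : Fin n →₀ ℕ => rootFun (p ^ N) α (f ^ ⌈c * (p : ℝ) ^ N⌉₊) with hS
  have hSsub : S ⊆ (testIdealReal p n f c : Set (MvPolynomial (Fin n) (ZMod p)))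
      ∩ {g | g.totalDegree ≤ ⌈M⌉₊ * f.totalDegree} := by
    rintro y ⟨α, rfl⟩
    constructor
    · rw [hEq]; exact Ideal.subset_span ⟨α, rfl⟩
    · have ha : ⌈c * (p : ℝ) ^ N⌉₊ ≤ ⌈M⌉₊ * p ^ N := by
        rw [Nat.ceil_le]
        push_cast
        calc c * (p : ℝ) ^ N ≤ M * (p : ℝ) ^ N := by
              apply mul_le_mul_of_nonneg_right hcM (by positivity)
          _ ≤ (⌈M⌉₊ : ℝ) * (p : ℝ) ^ N := by
              apply mul_le_mul_of_nonneg_right (Nat.le_ceil M) (by positivity)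
      have h1 : (rootFun (p ^ N) α (f ^ ⌈c * (p : ℝ) ^ N⌉₊)).totalDegree * p ^ N ≤
          (f ^ ⌈c * (p : ℝ) ^ N⌉₊).totalDegree := totalDegree_rootFun_mul_le (q_pos hp N) α _
      have h2 : (f ^ ⌈c * (p : ℝ) ^ N⌉₊).totalDegree ≤ ⌈c * (p : ℝ) ^ N⌉₊ * f.totalDegree :=
        totalDegree_pow f _
      have h3 : ⌈c * (p : ℝ) ^ N⌉₊ * f.totalDegree ≤ (⌈M⌉₊ * f.totalDegree) * p ^ N := by
        calc ⌈c * (p : ℝ) ^ N⌉₊ * f.totalDegree ≤ (⌈M⌉₊ * p ^ N) * f.totalDegree :=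
              Nat.mul_le_mul_right _ ha
          _ = (⌈M⌉₊ * f.totalDegree) * p ^ N := by ring
      have := le_trans h1 (le_trans h2 h3)
      exact Nat.le_of_mul_le_mul_right this (q_pos hp N)
  apply le_antisymm
  · conv_lhs => rw [hEq]
    exact Ideal.span_mono hSsub
  · rw [Ideal.span_le]
    exact Set.inter_subset_left

lemma testIdealReal_ne_of_jump {f : MvPolynomial (Fin n) (ZMod p)} {c1 c2 : ℝ}
    (h2 : IsFJumpingNumber p n f c2) (h1pos : 0 < c1) (hlt : c1 < c2) :
    testIdealReal p n f c1 ≠ testIdealReal p n f c2 := by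
  have := h2.2 (c2 - c1) (by linarith) (by linarith)
  rwa [show c2 - (c2 - c1) = c1 by ring] at this

lemma finite_jumpingNumbers (hp : p.Prime) (f : MvPolynomial (Fin n) (ZMod p)) (M : ℝ) :
    ({c : ℝ | IsFJumpingNumber p n f c} ∩ Set.Ioc 0 M).Finite := by
  haveI := Fact.mk hp
  haveI : NeZero p := ⟨hp.ne_zero⟩
  set D := ⌈M⌉₊ * f.totalDegree with hD
  set G : Set (MvPolynomial (Fin n) (ZMod p)) := {g | g.totalDegree ≤ D} with hG
  have hGfin : G.Finite := by
    have hGeq : G = (restrictTotalDegree (Fin n) (ZMod p) D : Set (MvPolynomial (Fin n) (ZMod p))) := by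
      ext g
      simp only [hG, Set.mem_setOf_eq, SetLike.mem_coe, mem_restrictTotalDegree]
    rw [hGeq]
    haveI : Finite (restrictTotalDegree (Fin n) (ZMod p) D) :=
      Module.finite_of_finite (ZMod p)
    exact Set.toFinite _
  set φ : ℝ → Set (MvPolynomial (Fin n) (ZMod p)) :=
    fun c => (testIdealReal p n f c : Set (MvPolynomial (Fin n) (ZMod p))) ∩ G with hφ
  apply Set.Finite.of_finite_image (f := φ)
  · apply Set.Finite.subset hGfin.finite_subsets
    rintro T ⟨c, -, rfl⟩
    exact Set.inter_subset_right
  · rintro c1 ⟨hj1, hc1⟩ c2 ⟨hj2, hc2⟩ hφeq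
    by_contra hne
    have key : ∀ a b : ℝ, a ∈ Set.Ioc (0:ℝ) M → b ∈ Set.Ioc (0:ℝ) M →
        IsFJumpingNumber p n f b → a < b → φ a = φ b → False := by
      intro a b ha hb hjb hab hfeq
      apply testIdealReal_ne_of_jump hjb ha.1 hab
      rw [testIdealReal_span_bounded hp f ha.2, testIdealReal_span_bounded hp f hb.2]
      rw [show ((testIdealReal p n f a : Set (MvPolynomial (Fin n) (ZMod p)))
        ∩ {g | g.totalDegree ≤ ⌈M⌉₊ * f.totalDegree}) = φ a from rfl, hfeq]
    rcases lt_trichotomy c1 c2 with h | h | h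
    · exact key c1 c2 hc1 hc2 hj2 h hφeq
    · exact hne h
    · exact key c2 c1 hc2 hc1 hj1 h hφeq.symm

end Finiteness

section Jumping

lemma jump_mul_p (hp : p.Prime) (f : MvPolynomial (Fin n) (ZMod p)) {c : ℝ}
    (hc : IsFJumpingNumber p n f c) : IsFJumpingNumber p n f ((p : ℝ) * c) := by
  have hppos : (0 : ℝ) < p := by exact_mod_cast hp.pos
  refine ⟨mul_pos hppos hc.1, ?_⟩
  intro ε hε hεpc heq
  have harg : (p : ℝ) * (c - ε / p) = (p : ℝ) * c - ε := by
    field_simp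
  have h1 : testIdealReal p n f (c - ε / p) = testIdealReal p n f c := by
    rw [testIdealReal_eq_rootIdeal hp f (c - ε / p), harg, heq,
      ← testIdealReal_eq_rootIdeal hp f c]
  exact hc.2 (ε / p) (div_pos hε hppos) (by rw [div_le_iff₀ hppos]; linarith [hεpc]) h1

lemma jump_sub_one (hp : p.Prime) (f : MvPolynomial (Fin n) (ZMod p)) {c : ℝ}
    (hc : IsFJumpingNumber p n f c) (h1c : 1 < c) : IsFJumpingNumber p n f (c - 1) := by
  refine ⟨by linarith, ?_⟩
  intro ε hε hεc heq
  have h1 : testIdealReal p n f (c - ε) = testIdealReal p n f c := by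
    have hA := testIdealReal_add_one hp f (show (0:ℝ) ≤ c - 1 - ε by linarith)
    rw [show c - 1 - ε + 1 = c - ε by ring] at hA
    have hB := testIdealReal_add_one hp f (show (0:ℝ) ≤ c - 1 by linarith)
    rw [show c - 1 + 1 = c by ring] at hB
    rw [hA, hB, heq]
  exact hc.2 ε hε (by linarith) h1

lemma jump_descent (hp : p.Prime) (f : MvPolynomial (Fin n) (ZMod p)) :
    ∀ (k : ℕ) (c : ℝ), c ≤ k → IsFJumpingNumber p n f c →
      ∃ m : ℕ, IsFJumpingNumber p n f (c - m) ∧ (c - m) ∈ Set.Ioc (0:ℝ) 1 := by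
  intro k
  induction k with
  | zero =>
    intro c hck hc
    exfalso
    have := hc.1
    simp at hck
    linarith
  | succ k ih =>
    intro c hck hc
    by_cases hc1 : c ≤ 1
    · exact ⟨0, by simpa using hc, by constructor <;> simp [hc.1, hc1]⟩
    · push_neg at hc1
      obtain ⟨m, hm1, hm2⟩ := ih (c - 1) (by push_cast at hck ⊢; linarith)
        (jump_sub_one hp f hc hc1)
      refine ⟨m + 1, ?_, ?_⟩
      · rw [show c - (↑(m + 1) : ℝ) = c - 1 - m by push_cast; ring]
        exact hm1
      · rw [show c - (↑(m + 1) : ℝ) = c - 1 - m by push_cast; ring]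
        exact hm2

end Jumping

end FJN

open FJN

theorem fJumpingNumbers_discrete_rational (p n : ℕ) (hp : p.Prime)
    (f : MvPolynomial (Fin n) (ZMod p)) (hf : f ≠ 0) :
    (∀ c : ℝ, IsFJumpingNumber p n f c → IsFJumpingNumber p n f ((p : ℝ) * c)) ∧
    (∀ x : ℝ, ¬ AccPt x (Filter.principal {c : ℝ | IsFJumpingNumber p n f c})) ∧
    (∀ c : ℝ, IsFJumpingNumber p n f c → ∃ q : ℚ, c = (q : ℝ)) := by
  haveI := Fact.mk hp
  refine ⟨fun c hc => jump_mul_p hp f hc, ?_, ?_⟩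
  · -- discreteness
    intro x hacc
    set S := {c : ℝ | IsFJumpingNumber p n f c} with hS
    have hF : (S ∩ Set.Ioc 0 (x + 1)).Finite := finite_jumpingNumbers hp f (x + 1)
    set F' := (S ∩ Set.Ioc 0 (x + 1)) \ {x} with hF'
    have hF'fin : F'.Finite := hF.diff
    have hxnot : x ∉ F' := fun h => h.2 rfl
    have hU : (F'ᶜ ∩ Set.Iio (x + 1)) ∈ nhds x := by
      apply Filter.inter_mem
      · exact hF'fin.isClosed.isOpen_compl.mem_nhds hxnot
      · exact Iio_mem_nhds (by linarith)
    obtain ⟨y, ⟨⟨hyc, hylt⟩, hyS⟩, hyx⟩ := (accPt_iff_nhds (x := x) (C := S)).1 hacc _ hU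
    apply hyc
    have hypos : 0 < y := (hyS : IsFJumpingNumber p n f y).1
    exact ⟨⟨hyS, ⟨hypos, le_of_lt hylt⟩⟩, hyx⟩
  · -- rationality
    intro c hc
    by_contra hq
    have hirr : Irrational c := by
      rintro ⟨q, hq'⟩
      exact hq ⟨q, hq'.symm⟩
    obtain ⟨m0, h0jump, h0Ioc⟩ := jump_descent hp f ⌈c⌉₊ c (Nat.le_ceil c) hc
    set P : ℝ → Prop := fun x => IsFJumpingNumber p n f x ∧ x ∈ Set.Ioc (0:ℝ) 1 with hP
    have hirr0 : Irrational (c - m0) := hirr.sub_natCast m0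
    have step : ∀ x : {x : ℝ // P x}, ∃ y : {y : ℝ // P y}, ∃ m : ℕ, (y : ℝ) = p * x - m := by
      rintro ⟨x, hxj, hxIoc⟩
      have hpx : IsFJumpingNumber p n f ((p:ℝ) * x) := jump_mul_p hp f hxj
      have hle : (p:ℝ) * x ≤ (p : ℕ) := by
        calc (p:ℝ) * x ≤ (p:ℝ) * 1 :=
              mul_le_mul_of_nonneg_left hxIoc.2 (by positivity)
          _ = (p : ℕ) := by push_cast; ring
      obtain ⟨m, hmj, hmIoc⟩ := jump_descent hp f p ((p:ℝ) * x) hle hpx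
      exact ⟨⟨(p:ℝ) * x - m, hmj, hmIoc⟩, m, rfl⟩
    choose Fstep hFstep using step
    set x0 : {x : ℝ // P x} := ⟨c - m0, h0jump, h0Ioc⟩ with hx0
    set seq : ℕ → {x : ℝ // P x} := fun j => Fstep^[j] x0 with hseq
    have hinv : ∀ j, ∃ m : ℕ, (seq j : ℝ) = (p:ℝ) ^ j * (c - m0) - m := by
      intro j
      induction j with
      | zero => exact ⟨0, by simp [hseq, hx0]⟩
      | succ j ih =>
        obtain ⟨m, hm⟩ := ih
        obtain ⟨m', hm'⟩ := hFstep (seq j)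
        refine ⟨p * m + m', ?_⟩
        have hit : seq (j + 1) = Fstep (seq j) := by
          rw [hseq]; exact Function.iterate_succ_apply' _ _ _
        rw [hit, hm', hm]
        push_cast
        ring
    have hne : ∀ j l, j < l → (seq j : ℝ) ≠ (seq l : ℝ) := by
      intro j l hjl hEq
      obtain ⟨a, ha⟩ := hinv j
      obtain ⟨b, hb⟩ := hinv l
      have hppow : (p:ℝ) ^ j < (p:ℝ) ^ l := by
        apply pow_lt_pow_right₀ ?_ hjl
        exact_mod_cast hp.one_lt
      rw [ha, hb] at hEq
      have hx0v : (c - (m0:ℝ)) = ((b:ℝ) - a) / ((p:ℝ) ^ l - (p:ℝ) ^ j) := by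
        rw [eq_div_iff (by linarith)]
        linear_combination -hEq
      apply hirr0
      exact ⟨((b:ℚ) - (a:ℚ)) / ((p:ℚ) ^ l - (p:ℚ) ^ j), by rw [hx0v]; push_cast; ring⟩
    have hinj : Function.Injective (fun j => (seq j : ℝ)) := by
      intro j l h
      rcases lt_trichotomy j l with hh | hh | hh
      · exact absurd h (hne j l hh)
      · exact hh
      · exact absurd h.symm (hne l j hh)
    have hmem : ∀ j, (seq j : ℝ) ∈ {c : ℝ | IsFJumpingNumber p n f c} ∩ Set.Ioc 0 1 :=
      fun j => ⟨(seq j).2.1, (seq j).2.2⟩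
    exact Set.infinite_of_injective_forall_mem hinj hmem (finite_jumpingNumbers hp f 1)
end
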